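/- arXiv:1910.12364 — 5 statements merged into one kernel-verified Lean document; each statement's English description precedes it below -/
import Mathlib

section
/- For every finite graph G, the neighbor connectivity of G is at most the vertex connectivity of G: κ_NB(G) ≤ κ(G). -/
open SimpleGraph

/-- Vertex connectivity: the least number of vertices whose removal leaves
a disconnected or trivial (single-vertex) graph. -/
noncomputable def vConn {V : Type*} (G : SimpleGraph V) : ℕ :=
  sInf {m | ∃ S : Set V, S.Finite ∧ S.ncard = m ∧
    (¬ (G.induce Sᶜ).Connected ∨ ∃ v, Sᶜ = {v})}

/-- Closed neighborhood of a set of vertices. -/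
def closedNbhd {V : Type*} (G : SimpleGraph V) (U : Set V) : Set V :=
  U ∪ {v | ∃ u ∈ U, G.Adj u v}

/-- The survival graph `G ⊖ U`: the subgraph induced on vertices
outside the closed neighborhood of `U`. -/
def survival {V : Type*} (G : SimpleGraph V) (U : Set V) :
    SimpleGraph (↥(closedNbhd G U)ᶜ) := G.induce (closedNbhd G U)ᶜ

/-- The survival graph of `U` is disconnected, complete, or empty. -/
def SurvivalBad {V : Type*} (G : SimpleGraph V) (U : Set V) : Prop :=
  ((closedNbhd G U)ᶜ ≠ ∅ ∧ ¬ (survival G U).Connected) ∨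
  (∀ a ∈ (closedNbhd G U)ᶜ, ∀ b ∈ (closedNbhd G U)ᶜ, a ≠ b → G.Adj a b) ∨
  (closedNbhd G U)ᶜ = ∅

/-- Neighbor connectivity. -/
noncomputable def nbConn {V : Type*} (G : SimpleGraph V) : ℕ :=
  sInf {m | ∃ U : Set V, U.Finite ∧ U.ncard = m ∧ SurvivalBad G U}

/-- The `k`-ary `n`-cube. -/
def QCube (n k : ℕ) : SimpleGraph (Fin n → ZMod k) where
  Adj u v := u ≠ v ∧ ∃ j, (u j = v j + 1 ∨ u j = v j - 1) ∧ ∀ i ≠ j, u i = v i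
  symm := by
    constructor
    rintro u v ⟨hne, j, hj, hrest⟩
    refine ⟨hne.symm, j, ?_, fun i hi => (hrest i hi).symm⟩
    rcases hj with h | h
    · right; rw [h]; ring
    · left; rw [h]; ring
  loopless := by constructor; rintro u ⟨hne, _⟩; exact hne rfl

lemma reach_mem {V : Type*} {G : SimpleGraph V} {T W : Set V}
    (hW : ∀ v w, v ∈ W → w ∈ T → G.Adj v w → w ∈ W) :
    ∀ {a b : ↥T}, (G.induce T).Reachable a b → (a : V) ∈ W → (b : V) ∈ W := by
  intro a b h
  obtain ⟨w⟩ := h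
  induction w with
  | nil => exact id
  | cons hadj p ih =>
      intro ha
      exact ih (hW _ _ ha (Subtype.coe_prop _) hadj)

lemma mem_closedNbhd {V : Type*} {G : SimpleGraph V} {U : Set V} {v : V} :
    v ∈ closedNbhd G U ↔ v ∈ U ∨ ∃ u ∈ U, G.Adj u v := Iff.rfl

lemma closedNbhd_mono {V : Type*} (G : SimpleGraph V) {A B : Set V} (h : A ⊆ B) :
    closedNbhd G A ⊆ closedNbhd G B := by
  rintro v (hv | ⟨u, hu, hadj⟩)
  · exact Or.inl (h hv)
  · exact Or.inr ⟨u, h hu, hadj⟩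

lemma mem_closedNbhd_union_singleton {V : Type*} {G : SimpleGraph V} {A : Set V} {w v : V} :
    v ∈ closedNbhd G (A ∪ {w}) ↔ v ∈ closedNbhd G A ∨ v = w ∨ G.Adj w v := by
  simp only [mem_closedNbhd, Set.mem_union, Set.mem_singleton_iff]
  constructor
  · rintro ((h | rfl) | ⟨u, (hu | rfl), hadj⟩)
    · exact Or.inl (Or.inl h)
    · exact Or.inr (Or.inl rfl)
    · exact Or.inl (Or.inr ⟨u, hu, hadj⟩)
    · exact Or.inr (Or.inr hadj)
  · rintro ((h | ⟨u, hu, hadj⟩) | rfl | hadj)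
    · exact Or.inl (Or.inl h)
    · exact Or.inr ⟨u, Or.inl hu, hadj⟩
    · exact Or.inl (Or.inr rfl)
    · exact Or.inr ⟨w, Or.inr rfl, hadj⟩

lemma main_lemma {V : Type*} [Fintype V] (G : SimpleGraph V) (S C1 C2 : Set V) (k : ℕ)
    (hk : S.ncard = k)
    (hpart : Sᶜ = C1 ∪ C2) (hdisj : Disjoint C1 C2)
    (hC1ne : C1.Nonempty) (hC2ne : C2.Nonempty)
    (hedge : ∀ v ∈ C1, ∀ w ∈ C2, ¬ G.Adj v w)
    (hnbr : ∀ s ∈ S, (∃ c ∈ C1, G.Adj s c) ∧ ∃ c ∈ C2, G.Adj s c)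
    (hF : ∀ U : Set V, U.ncard ≤ k → ¬ SurvivalBad G U) : False := by
  classical
  -- basic facts
  have hC1S : ∀ v ∈ C1, v ∉ S := fun v hv hvS => by
    have : v ∈ Sᶜ := hpart ▸ Or.inl hv
    exact this hvS
  have hC2S : ∀ v ∈ C2, v ∉ S := fun v hv hvS => by
    have : v ∈ Sᶜ := hpart ▸ Or.inr hv
    exact this hvS
  -- extra vertex in C2 does not help cover C1, and vice versa
  have hside1 : ∀ u ∈ C2, ∀ v ∈ C1, ∀ A : Set V,
      (v ∈ closedNbhd G (A ∪ {u}) ↔ v ∈ closedNbhd G A) := by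
    intro u hu v hv A
    rw [mem_closedNbhd_union_singleton]
    constructor
    · rintro (h | rfl | hadj)
      · exact h
      · exact absurd rfl (hdisj.ne_of_mem hv hu)
      · exact absurd hadj.symm (hedge v hv u hu)
    · exact Or.inl
  have hside2 : ∀ u ∈ C1, ∀ v ∈ C2, ∀ A : Set V,
      (v ∈ closedNbhd G (A ∪ {u}) ↔ v ∈ closedNbhd G A) := by
    intro u hu v hv A
    rw [mem_closedNbhd_union_singleton]
    constructor
    · rintro (h | rfl | hadj)
      · exact h
      · exact absurd rfl (hdisj.ne_of_mem hu hv).symm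
      · exact absurd hadj (hedge u hu v hv)
    · exact Or.inl
  -- the dichotomy
  have star : ∀ U : Set V, U.ncard ≤ k → S ⊆ closedNbhd G U →
      (C1 ⊆ closedNbhd G U ∧ ¬ C2 ⊆ closedNbhd G U) ∨
      (C2 ⊆ closedNbhd G U ∧ ¬ C1 ⊆ closedNbhd G U) := by
    intro U hcard hScov
    have h3 : ¬ (C1 ⊆ closedNbhd G U ∧ C2 ⊆ closedNbhd G U) := by
      rintro ⟨h1, h2⟩
      apply hF U hcard
      right; right
      ext v
      simp only [Set.mem_compl_iff, Set.mem_empty_iff_false, iff_false, not_not]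
      by_contra hv
      have hvS : v ∈ Sᶜ := fun hvS => hv (hScov hvS)
      rcases hpart ▸ hvS with h | h
      · exact hv (h1 h)
      · exact hv (h2 h)
    have h1 : C1 ⊆ closedNbhd G U ∨ C2 ⊆ closedNbhd G U := by
      by_contra hcon
      push_neg at hcon
      obtain ⟨p, hpC1, hpM⟩ := Set.not_subset.mp hcon.1
      obtain ⟨q, hqC2, hqM⟩ := Set.not_subset.mp hcon.2
      apply hF U hcard
      left
      constructor
      · intro h
        exact (h ▸ hpM : p ∈ (∅ : Set V))
      · intro hconn
        have hreach := hconn.preconnected ⟨p, hpM⟩ ⟨q, hqM⟩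
        have hW : ∀ v w, v ∈ C1 → w ∈ (closedNbhd G U)ᶜ → G.Adj v w → w ∈ C1 := by
          intro v w hv hw hadj
          have hwS : w ∈ Sᶜ := fun hwS => hw (hScov hwS)
          rcases hpart ▸ hwS with h | h
          · exact h
          · exact absurd hadj (hedge v hv w h)
        have : q ∈ C1 := reach_mem hW hreach hpC1
        exact hdisj.ne_of_mem this hqC2 rfl
    rcases h1 with h | h
    · exact Or.inl ⟨h, fun h2 => h3 ⟨h, h2⟩⟩
    · exact Or.inr ⟨h, fun h2 => h3 ⟨h2, h⟩⟩
  -- choice of neighbours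
  choose! xs hxs1 hxs2 using fun s hs => (hnbr s hs).1
  choose! ys hys1 hys2 using fun s hs => (hnbr s hs).2
  have hSfin : S.Finite := Set.toFinite S
  set SF : Finset V := hSfin.toFinset with hSF
  have hSFmem : ∀ a, a ∈ SF ↔ a ∈ S := fun a => hSfin.mem_toFinset
  have hSFcard : SF.card = k := by
    rw [← hk, Set.ncard_eq_toFinset_card S hSfin]
  -- the family of transversals
  set Uσ : Finset V → Set V := fun σ => ↑((SF \ σ).image xs ∪ σ.image ys) with hUσ
  have hUcard : ∀ σ, σ ⊆ SF → (Uσ σ).ncard ≤ k := by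
    intro σ hσ
    rw [hUσ]
    simp only [Set.ncard_coe_finset]
    calc ((SF \ σ).image xs ∪ σ.image ys).card
        ≤ ((SF \ σ).image xs).card + (σ.image ys).card := Finset.card_union_le _ _
      _ ≤ (SF \ σ).card + σ.card :=
          Nat.add_le_add Finset.card_image_le Finset.card_image_le
      _ = SF.card := Finset.card_sdiff_add_card_eq_card hσ
      _ = k := hSFcard
  have hUcover : ∀ σ, σ ⊆ SF → S ⊆ closedNbhd G (Uσ σ) := by
    intro σ hσ s hs
    by_cases hsσ : s ∈ σ
    · refine Or.inr ⟨ys s, ?_, (hys2 s hs).symm⟩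
      rw [hUσ]
      simp only [Finset.coe_union, Finset.coe_image, Set.mem_union]
      exact Or.inr ⟨s, hsσ, rfl⟩
    · refine Or.inr ⟨xs s, ?_, (hxs2 s hs).symm⟩
      rw [hUσ]
      simp only [Finset.coe_union, Finset.coe_image, Set.mem_union]
      exact Or.inl ⟨s, Finset.mem_sdiff.mpr ⟨(hSFmem s).mpr hs, hsσ⟩, rfl⟩
  -- elements of Uσ lie in C1 ∪ C2
  have hUσC : ∀ σ, σ ⊆ SF → ∀ u ∈ Uσ σ, u ∈ C1 ∪ C2 := by
    intro σ hσ u hu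
    rw [hUσ] at hu
    simp only [Finset.coe_union, Finset.coe_image, Set.mem_union, Set.mem_image] at hu
    rcases hu with ⟨a, ha, rfl⟩ | ⟨a, ha, rfl⟩
    · exact Or.inl (hxs1 a ((hSFmem a).mp (Finset.mem_sdiff.mp (Finset.mem_coe.mp ha)).1))
    · exact Or.inr (hys1 a ((hSFmem a).mp (hσ (Finset.mem_coe.mp ha))))
  -- no vertex of C1 is covered by a subset of C2 and vice versa
  have hnocov1 : ∀ W : Set V, (∀ u ∈ W, u ∈ C2) → ∀ v ∈ C1, v ∉ closedNbhd G W := by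
    rintro W hW v hv (h | ⟨u, hu, hadj⟩)
    · exact hdisj.ne_of_mem hv (hW v h) rfl
    · exact hedge v hv u (hW u hu) hadj.symm
  have hnocov2 : ∀ W : Set V, (∀ u ∈ W, u ∈ C1) → ∀ v ∈ C2, v ∉ closedNbhd G W := by
    rintro W hW v hv (h | ⟨u, hu, hadj⟩)
    · exact hdisj.ne_of_mem (hW v h) hv rfl
    · exact hedge u (hW u hu) v hv hadj
  -- the switching function
  set f : Finset V → Prop := fun σ => C1 ⊆ closedNbhd G (Uσ σ) with hf
  have hU0 : ∀ u ∈ Uσ (∅ : Finset V), u ∈ C1 := by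
    intro u hu
    rw [hUσ] at hu
    simp only [Finset.sdiff_empty, Finset.image_empty, Finset.union_empty, Finset.coe_image,
      Set.mem_image, Finset.mem_coe] at hu
    obtain ⟨a, ha, rfl⟩ := hu
    exact hxs1 a ((hSFmem a).mp ha)
  have hUS : ∀ u ∈ Uσ SF, u ∈ C2 := by
    intro u hu
    rw [hUσ] at hu
    simp only [Finset.sdiff_self, Finset.image_empty, Finset.empty_union, Finset.coe_image,
      Set.mem_image, Finset.mem_coe] at hu
    obtain ⟨a, ha, rfl⟩ := hu
    exact hys1 a ((hSFmem a).mp ha)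
  have base1 : f ∅ := by
    obtain ⟨b, hb⟩ := hC2ne
    rcases star (Uσ ∅) (hUcard ∅ (Finset.empty_subset _)) (hUcover ∅ (Finset.empty_subset _))
      with ⟨h, _⟩ | ⟨h2, _⟩
    · exact h
    · exact absurd (h2 hb) (hnocov2 _ hU0 b hb)
  have base2 : ¬ f SF := by
    obtain ⟨a, ha⟩ := hC1ne
    rcases star (Uσ SF) (hUcard SF le_rfl) (hUcover SF le_rfl)
      with ⟨h, _⟩ | ⟨_, h2⟩
    · exact absurd (h ha) (hnocov1 _ hUS a ha)
    · exact h2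
  -- find the switching point
  have flip : ∃ σ s, σ ⊆ SF ∧ s ∈ SF ∧ s ∉ σ ∧ f σ ∧ ¬ f (insert s σ) := by
    by_contra hno
    push_neg at hno
    have hall : ∀ σ : Finset V, σ ⊆ SF → f σ := by
      intro σ
      induction σ using Finset.induction_on with
      | empty => exact fun _ => base1
      | @insert s σ hs ih =>
          intro hsub
          rw [Finset.insert_subset_iff] at hsub
          exact hno σ s (hsub.2) hsub.1 hs (ih hsub.2)
    exact base2 (hall SF le_rfl)
  obtain ⟨σ, s, hσSF, hsSF, hsσ, hfσ, hfins⟩ := flip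
  have hsS : s ∈ S := (hSFmem s).mp hsSF
  -- the common part A
  set A : Set V := ↑((SF \ insert s σ).image xs ∪ σ.image ys) with hA
  have hsdiff : SF \ σ = insert s (SF \ insert s σ) := by
    ext a
    by_cases h : a = s <;>
      simp only [Finset.mem_sdiff, Finset.mem_insert, h] <;> tauto
  have hAx : Uσ σ = A ∪ {xs s} := by
    rw [hUσ]
    simp only
    rw [hsdiff, Finset.image_insert, Finset.insert_union, Finset.coe_insert,
      Set.union_singleton, hA]
  have hAy : Uσ (insert s σ) = A ∪ {ys s} := by
    have h2 : SF \ insert s σ = SF \ insert s (insert s σ) := by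
      rw [Finset.insert_idem]
    rw [hUσ]
    simp only
    rw [Finset.image_insert, Finset.union_insert, Finset.coe_insert,
      Set.union_singleton, hA]
  have hAcard : ∀ w : V, (A ∪ {w}).ncard ≤ k := by
    intro w
    have h1 : SF \ insert s σ = (SF \ σ).erase s := by
      ext a
      by_cases h : a = s <;>
        simp only [Finset.mem_sdiff, Finset.mem_insert, Finset.mem_erase, h] <;> tauto
    have h2 : (SF \ σ).card + σ.card = k := by
      rw [Finset.card_sdiff_add_card_eq_card hσSF, hSFcard]
    have h3 : s ∈ SF \ σ := Finset.mem_sdiff.mpr ⟨hsSF, hsσ⟩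
    have h4 : ((SF \ σ).erase s).card = (SF \ σ).card - 1 :=
      Finset.card_erase_of_mem h3
    have h5 : 1 ≤ (SF \ σ).card := Finset.card_pos.mpr ⟨s, h3⟩
    have h6 : A.ncard ≤ k - 1 := by
      rw [hA, Set.ncard_coe_finset]
      calc ((SF \ insert s σ).image xs ∪ σ.image ys).card
          ≤ ((SF \ insert s σ).image xs).card + (σ.image ys).card :=
            Finset.card_union_le _ _
        _ ≤ (SF \ insert s σ).card + σ.card :=
            Nat.add_le_add Finset.card_image_le Finset.card_image_le
        _ ≤ k - 1 := by rw [h1, h4]; omega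
    have h7 : (A ∪ {w}).ncard ≤ A.ncard + 1 := by
      have := Set.ncard_union_le A {w}
      simpa using this
    omega
  have hcov : ∀ w : V, (w = s ∨ G.Adj s w) → S ⊆ closedNbhd G (A ∪ {w}) := by
    intro w hw s' hs'
    by_cases h : s' = s
    · subst h
      rcases hw with rfl | hadj
      · exact Or.inl (Or.inr rfl)
      · exact Or.inr ⟨w, Or.inr rfl, hadj.symm⟩
    · by_cases h2 : s' ∈ σ
      · refine Or.inr ⟨ys s', Or.inl ?_, (hys2 s' hs').symm⟩
        rw [hA]
        simp only [Finset.coe_union, Finset.coe_image, Set.mem_union, Set.mem_image,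
          Finset.mem_coe]
        exact Or.inr ⟨s', h2, rfl⟩
      · refine Or.inr ⟨xs s', Or.inl ?_, (hxs2 s' hs').symm⟩
        rw [hA]
        simp only [Finset.coe_union, Finset.coe_image, Set.mem_union, Set.mem_image,
          Finset.mem_coe]
        exact Or.inl ⟨s', Finset.mem_sdiff.mpr ⟨(hSFmem s').mpr hs',
          fun hc => h ((Finset.mem_insert.mp hc).resolve_right h2)⟩, rfl⟩
  -- the leftovers
  set P : Set V := C1 \ closedNbhd G A with hP
  set Q : Set V := C2 \ closedNbhd G A with hQ
  have hPne : P.Nonempty := by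
    have hfins' : ¬ C1 ⊆ closedNbhd G (A ∪ {ys s}) := by rw [← hAy]; exact hfins
    obtain ⟨v, hv, hvM⟩ := Set.not_subset.mp hfins'

    exact ⟨v, hv, fun h => hvM (closedNbhd_mono G Set.subset_union_left h)⟩
  have hQne : Q.Nonempty := by
    have h := star (Uσ σ) (hUcard σ hσSF) (hUcover σ hσSF)
    rcases h with ⟨_, h2⟩ | ⟨_, h2⟩
    · obtain ⟨v, hv, hvM⟩ := Set.not_subset.mp h2
      rw [hAx] at hvM
      exact ⟨v, hv, fun h => hvM (closedNbhd_mono G Set.subset_union_left h)⟩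
    · exact absurd hfσ h2
  have hPx : ∀ x', x' ∈ C1 → G.Adj s x' → ∀ p ∈ P, p = x' ∨ G.Adj x' p := by
    intro x' hx' hadj p hp
    rcases star (A ∪ {x'}) (hAcard x') (hcov x' (Or.inr hadj)) with ⟨h1, _⟩ | ⟨h1, _⟩
    · have := h1 hp.1
      rw [mem_closedNbhd_union_singleton] at this
      exact this.resolve_left hp.2
    · obtain ⟨q, hq⟩ := hQne
      have := h1 hq.1
      rw [hside2 x' hx' q hq.1 A] at this
      exact absurd this hq.2
  have hQy : ∀ y', y' ∈ C2 → G.Adj s y' → ∀ q ∈ Q, q = y' ∨ G.Adj y' q := by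
    intro y' hy' hadj q hq
    rcases star (A ∪ {y'}) (hAcard y') (hcov y' (Or.inr hadj)) with ⟨h1, _⟩ | ⟨h1, _⟩
    · obtain ⟨p, hp⟩ := hPne
      have := h1 hp.1
      rw [hside1 y' hy' p hp.1 A] at this
      exact absurd this hp.2
    · have := h1 hq.1
      rw [mem_closedNbhd_union_singleton] at this
      exact this.resolve_left hq.2
  have hcase : (∀ p ∈ P, G.Adj s p) ∨ (∀ q ∈ Q, G.Adj s q) := by
    rcases star (A ∪ {s}) (hAcard s) (hcov s (Or.inl rfl)) with ⟨h1, _⟩ | ⟨h1, _⟩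
    · left
      intro p hp
      have := h1 hp.1
      rw [mem_closedNbhd_union_singleton] at this
      rcases this.resolve_left hp.2 with rfl | h
      · exact absurd hsS (hC1S p hp.1)
      · exact h
    · right
      intro q hq
      have := h1 hq.1
      rw [mem_closedNbhd_union_singleton] at this
      rcases this.resolve_left hq.2 with rfl | h
      · exact absurd hsS (hC2S q hq.1)
      · exact h
  rcases hcase with hPadj | hQadj
  · -- P is a clique; use U = A ∪ {ys s}
    have hclique : ∀ p ∈ P, ∀ p' ∈ P, p ≠ p' → G.Adj p p' := by
      intro p hp p' hp' hne
      rcases hPx p hp.1 (hPadj p hp) p' hp' with h | h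
      · exact absurd h.symm hne
      · exact h
    apply hF (A ∪ {ys s}) (hAcard (ys s))
    right; left
    have hsub : ∀ v, v ∈ (closedNbhd G (A ∪ {ys s}))ᶜ → v ∈ P := by
      intro v hv
      have hvM : v ∉ closedNbhd G (A ∪ {ys s}) := hv
      have hvS : v ∉ S := fun h => hvM (hcov (ys s) (Or.inr (hys2 s hsS)) h)
      have hvSc : v ∈ Sᶜ := hvS
      rcases hpart ▸ hvSc with h | h
      · exact ⟨h, fun hc => hvM (closedNbhd_mono G Set.subset_union_left hc)⟩
      · exfalso
        have hvA : v ∉ closedNbhd G A :=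
          fun hc => hvM (closedNbhd_mono G Set.subset_union_left hc)
        have hvQ : v ∈ Q := ⟨h, hvA⟩
        rcases hQy (ys s) (hys1 s hsS) (hys2 s hsS) v hvQ with rfl | hadj
        · exact hvM (Or.inl (Or.inr rfl))
        · exact hvM (Or.inr ⟨ys s, Or.inr rfl, hadj⟩)
    intro a ha b hb hab
    exact hclique a (hsub a ha) b (hsub b hb) hab
  · -- Q is a clique; use U = A ∪ {xs s} = Uσ σ
    have hclique : ∀ q ∈ Q, ∀ q' ∈ Q, q ≠ q' → G.Adj q q' := by
      intro q hq q' hq' hne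
      rcases hQy q hq.1 (hQadj q hq) q' hq' with h | h
      · exact absurd h.symm hne
      · exact h
    apply hF (A ∪ {xs s}) (hAcard (xs s))
    right; left
    have hfσ' : C1 ⊆ closedNbhd G (A ∪ {xs s}) := by
      rw [← hAx]; exact hfσ
    have hsub : ∀ v, v ∈ (closedNbhd G (A ∪ {xs s}))ᶜ → v ∈ Q := by
      intro v hv
      have hvM : v ∉ closedNbhd G (A ∪ {xs s}) := hv
      have hvS : v ∉ S := fun h => hvM (hcov (xs s) (Or.inr (hxs2 s hsS)) h)
      have hvSc : v ∈ Sᶜ := hvS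
      rcases hpart ▸ hvSc with h | h
      · exact absurd (hfσ' h) hvM
      · exact ⟨h, fun hc => hvM (closedNbhd_mono G Set.subset_union_left hc)⟩
    intro a ha b hb hab
    exact hclique a (hsub a ha) b (hsub b hb) hab

theorem stmt3' {V : Type*} [Fintype V] (G : SimpleGraph V) :
    sInf {m | ∃ U : Set V, U.Finite ∧ U.ncard = m ∧ SurvivalBad G U} ≤
    sInf {m | ∃ S : Set V, S.Finite ∧ S.ncard = m ∧
      (¬ (G.induce Sᶜ).Connected ∨ ∃ v, Sᶜ = {v})} := by
  classical
  set VS := {m | ∃ S : Set V, S.Finite ∧ S.ncard = m ∧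
      (¬ (G.induce Sᶜ).Connected ∨ ∃ v, Sᶜ = {v})} with hVS
  set kk := sInf VS with hkk
  have hVSne : VS.Nonempty := by
    refine ⟨(Set.univ : Set V).ncard, Set.univ, Set.toFinite _, rfl, Or.inl fun h => ?_⟩
    obtain ⟨⟨v, hv⟩⟩ := h.nonempty
    exact hv (Set.mem_univ v)
  obtain ⟨S, hSfin, hScard, hSbad⟩ := Nat.sInf_mem hVSne
  suffices h : ∃ U : Set V, U.ncard ≤ kk ∧ SurvivalBad G U by
    obtain ⟨U, h1, h2⟩ := h
    exact le_trans (Nat.sInf_le ⟨U, Set.toFinite _, rfl, h2⟩) h1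
  have hsubc : (closedNbhd G S)ᶜ ⊆ Sᶜ := fun v hv hvS => hv (Or.inl hvS)
  rcases hSbad with hnc | ⟨v, hv⟩
  swap
  · -- complement is a single vertex
    refine ⟨S, le_of_eq hScard, Or.inr (Or.inl ?_)⟩
    intro a ha b hb hab
    rw [hv] at hsubc
    exact absurd ((hsubc ha).trans (hsubc hb).symm) hab
  by_cases hne : Sᶜ = ∅
  · refine ⟨S, le_of_eq hScard, Or.inr (Or.inr ?_)⟩
    exact Set.subset_eq_empty (hne ▸ hsubc) rfl
  -- the complement is nonempty and disconnected
  haveI hnonempty : Nonempty ↥Sᶜ := Set.nonempty_coe_sort.mpr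
    (Set.nonempty_iff_ne_empty.mpr hne)
  have hnp : ¬ (G.induce Sᶜ).Preconnected := fun hp => hnc ⟨hp⟩
  rw [SimpleGraph.Preconnected] at hnp
  push_neg at hnp
  obtain ⟨x, y, hxy⟩ := hnp
  set C1 : Set V := {w | ∃ h : w ∈ Sᶜ, (G.induce Sᶜ).Reachable x ⟨w, h⟩} with hC1
  set C2 : Set V := Sᶜ \ C1 with hC2
  have hC1sub : C1 ⊆ Sᶜ := fun w hw => hw.1
  have hL1 : ∀ v ∈ C1, ∀ w, w ∈ Sᶜ → G.Adj v w → w ∈ C1 := by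
    rintro v ⟨hv, hr⟩ w hw hadj
    exact ⟨hw, hr.trans (SimpleGraph.Adj.reachable
      (comap_adj.mpr hadj : (G.induce Sᶜ).Adj ⟨v, hv⟩ ⟨w, hw⟩))⟩
  have hpart : Sᶜ = C1 ∪ C2 := (Set.union_diff_cancel hC1sub).symm
  have hdisj : Disjoint C1 C2 := Set.disjoint_sdiff_right
  have hxC1 : (x : V) ∈ C1 := ⟨x.2, by rw [Subtype.coe_eta]⟩
  have hyC2 : (y : V) ∈ C2 := by
    refine ⟨y.2, fun hy => ?_⟩
    obtain ⟨h, hr⟩ := hy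
    rw [Subtype.coe_eta] at hr
    exact hxy hr
  have hedge : ∀ v ∈ C1, ∀ w ∈ C2, ¬ G.Adj v w := fun v hv w hw hadj =>
    hw.2 (hL1 v hv w hw.1 hadj)
  -- every cut vertex has neighbours on both sides
  have hnbr : ∀ s ∈ S, (∃ c ∈ C1, G.Adj s c) ∧ ∃ c ∈ C2, G.Adj s c := by
    intro s hs
    have hknz : 1 ≤ S.ncard := (Set.ncard_pos (Set.toFinite S)).mpr ⟨s, hs⟩
    have hTcompl : (S \ {s})ᶜ = Sᶜ ∪ {s} := by
      rw [Set.diff_eq, Set.compl_inter, compl_compl]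
    have hTcard : (S \ {s}).ncard = S.ncard - 1 :=
      Set.ncard_diff_singleton_of_mem hs
    have hmin : ¬ (¬ (G.induce (S \ {s})ᶜ).Connected ∨ ∃ v, (S \ {s})ᶜ = {v}) := by
      intro hbad
      have : kk ≤ (S \ {s}).ncard := Nat.sInf_le ⟨S \ {s}, Set.toFinite _, rfl, hbad⟩
      omega
    rw [not_or, not_not] at hmin
    have hx' : (x : V) ∈ (S \ {s})ᶜ := by rw [hTcompl]; exact Or.inl x.2
    have hy' : (y : V) ∈ (S \ {s})ᶜ := by rw [hTcompl]; exact Or.inl y.2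
    have hreach := hmin.1.preconnected ⟨(x : V), hx'⟩ ⟨(y : V), hy'⟩
    constructor
    · by_contra hcon
      push_neg at hcon
      have hW : ∀ v w, v ∈ C1 → w ∈ (S \ {s})ᶜ → G.Adj v w → w ∈ C1 := by
        intro v w hv hw hadj
        have hw' : w ∈ Sᶜ ∪ {s} := by rw [← hTcompl]; exact hw
        rcases hw' with h | h
        · exact hL1 v hv w h hadj
        · rw [Set.mem_singleton_iff] at h
          subst h
          exact absurd hadj.symm (hcon v hv)
      exact hyC2.2 (reach_mem hW hreach hxC1)
    · by_contra hcon
      push_neg at hcon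
      have hW : ∀ v w, v ∈ C1 ∪ {s} → w ∈ (S \ {s})ᶜ → G.Adj v w → w ∈ C1 ∪ {s} := by
        intro v w hv hw hadj
        have hw' : w ∈ Sᶜ ∪ {s} := by rw [← hTcompl]; exact hw
        rcases hw' with h | h
        · rcases hv with hv1 | hv1
          · exact Or.inl (hL1 v hv1 w h hadj)
          · rw [Set.mem_singleton_iff] at hv1
            subst hv1
            rcases hpart ▸ h with h2 | h2
            · exact Or.inl h2
            · exact absurd hadj (hcon w h2)
        · exact Or.inr h
      rcases reach_mem hW hreach (Or.inl hxC1) with h | h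
      · exact hyC2.2 h
      · rw [Set.mem_singleton_iff] at h
        exact (y.2 : (y : V) ∈ Sᶜ) (h ▸ hs)
  by_contra hcon
  push_neg at hcon
  exact main_lemma G S C1 C2 kk hScard hpart hdisj ⟨_, hxC1⟩ ⟨_, hyC2⟩ hedge hnbr
    (fun U hU => hcon U hU)

/-- Neighbor connectivity is at most vertex connectivity. -/
theorem stmt3 {V : Type*} [Fintype V] (G : SimpleGraph V) :
    nbConn G ≤ vConn G := by
  unfold nbConn vConn
  exact stmt3' G
end

section
/- In the 3-ary n-cube Q_n^3, two distinct vertices x and y have exactly one common neighbor if and only if x and y are adjacent. -/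
open SimpleGraph

lemma zmod3_ne_pm {a b : ZMod 3} (h : a ≠ b) : a = b + 1 ∨ a = b - 1 := by
  revert h; revert a b; decide

lemma zmod3_pm_ne {a b : ZMod 3} (h : a = b + 1 ∨ a = b - 1) : a ≠ b := by
  revert h; revert a b; decide

lemma zmod3_third_ne {a b : ZMod 3} (h : a ≠ b) : -(a + b) ≠ a ∧ -(a + b) ≠ b := by
  revert h; revert a b; decide

lemma fin3_third_unique : ∀ (a b c d : Fin 3), a ≠ b → c ≠ a → c ≠ b →
    d ≠ a → d ≠ b → c = d := by decide

lemma zmod3_third_unique : ∀ (a b c d : ZMod 3), a ≠ b → c ≠ a → c ≠ b →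
    d ≠ a → d ≠ b → c = d := fin3_third_unique

theorem stmt7 (n : ℕ) (x y : Fin n → ZMod 3) (hxy : x ≠ y) :
    ((QCube n 3).neighborSet x ∩ (QCube n 3).neighborSet y).ncard = 1 ↔
      (QCube n 3).Adj x y := by
  constructor
  · intro h1
    obtain ⟨z, hz⟩ := Set.ncard_eq_one.mp h1
    have hzmem : z ∈ (QCube n 3).neighborSet x ∩ (QCube n 3).neighborSet y := by
      rw [hz]; rfl
    obtain ⟨hxz, hyz⟩ := hzmem
    obtain ⟨hne1, i, hi, hrest1⟩ := hxz
    obtain ⟨hne2, i', hi', hrest2⟩ := hyz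
    by_cases hii : i = i'
    · -- x and y agree off i, so they differ only at i: adjacent
      subst hii
      have hag : ∀ k ≠ i, x k = y k := fun k hk => (hrest1 k hk).trans (hrest2 k hk).symm
      have hneq : x i ≠ y i := by
        intro h
        apply hxy
        funext k
        by_cases hk : k = i
        · rw [hk]; exact h
        · exact hag k hk
      exact ⟨hxy, i, zmod3_ne_pm hneq, hag⟩
    · -- x, y differ in two coordinates: a second common neighbor exists, contradiction
      exfalso
      have hxi' : x i' = z i' := hrest1 i' (Ne.symm hii)
      have hyi : y i = z i := hrest2 i hii
      have hyne : y i' ≠ x i' := by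
        rw [hxi']; exact zmod3_pm_ne hi'
      have hxne : x i ≠ y i := by
        rw [hyi]; exact zmod3_pm_ne hi
      set w := Function.update x i' (y i') with hw
      have hwi' : w i' = y i' := Function.update_self i' (y i') x
      have hwk : ∀ k ≠ i', w k = x k := fun k hk => Function.update_of_ne hk _ _
      have hxw : (QCube n 3).Adj x w := by
        refine ⟨?_, i', ?_, fun k hk => (hwk k hk).symm⟩
        · intro h; apply hyne; rw [← hwi', ← h]
        · rw [hwi']; exact zmod3_ne_pm (Ne.symm hyne)
      have hyw : (QCube n 3).Adj y w := by
        refine ⟨?_, i, ?_, ?_⟩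
        · intro h
          apply hxne
          have := congrFun h i
          rw [hwk i hii] at this
          exact this.symm
        · rw [hwk i hii]; exact zmod3_ne_pm (Ne.symm hxne)
        · intro k hk
          by_cases hk' : k = i'
          · rw [hk', hwi']
          · rw [hwk k hk']
            exact (hrest2 k hk').trans (hrest1 k hk).symm
      have hwmem : w ∈ (QCube n 3).neighborSet x ∩ (QCube n 3).neighborSet y := ⟨hxw, hyw⟩
      rw [hz] at hwmem
      have hwz : w = z := hwmem
      apply zmod3_pm_ne hi
      rw [← hwz, hwk i hii]
  · rintro ⟨hne, j, hj, hrest⟩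
    have hxyj : x j ≠ y j := zmod3_pm_ne hj
    obtain ⟨hta, htb⟩ := zmod3_third_ne hxyj
    set z₀ := Function.update x j (-(x j + y j)) with hz0
    have hz0j : z₀ j = -(x j + y j) := Function.update_self j _ x
    have hz0k : ∀ k ≠ j, z₀ k = x k := fun k hk => Function.update_of_ne hk _ _
    have hset : (QCube n 3).neighborSet x ∩ (QCube n 3).neighborSet y = {z₀} := by
      ext z
      simp only [Set.mem_inter_iff, mem_neighborSet, Set.mem_singleton_iff]
      constructor
      · rintro ⟨⟨hne1, i, hi, hrest1⟩, ⟨hne2, i', hi', hrest2⟩⟩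
        have hij : i = j := by
          by_contra hij
          have hzj : z j = x j := (hrest1 j (fun h => hij h.symm)).symm
          have hi'j : i' = j := by
            by_contra h
            exact hxyj ((hrest2 j (fun hh => h hh.symm)).trans hzj).symm
          rw [hi'j] at hrest2
          have hyzi : y i = z i := hrest2 i hij
          exact zmod3_pm_ne hi ((hrest i hij).trans hyzi)
        rw [hij] at hi hrest1
        have hi'j : i' = j := by
          by_contra h
          exact zmod3_pm_ne hi' ((hrest i' h).symm.trans (hrest1 i' h))
        rw [hi'j] at hi' hrest2
        have hzx : z j ≠ x j := fun h => zmod3_pm_ne hi h.symm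
        have hzy : z j ≠ y j := fun h => zmod3_pm_ne hi' h.symm
        have hzi : z j = -(x j + y j) :=
          zmod3_third_unique (x j) (y j) (z j) _ hxyj hzx hzy hta htb
        funext k
        by_cases hk : k = j
        · rw [hk, hzi, hz0j]
        · rw [← hrest1 k hk, hz0k k hk]
      · rintro rfl
        refine ⟨⟨?_, j, ?_, fun k hk => (hz0k k hk).symm⟩,
                ⟨?_, j, ?_, ?_⟩⟩
        · intro h
          apply hta
          rw [← hz0j, ← h]
        · rw [hz0j]; exact zmod3_ne_pm (Ne.symm hta)
        · intro h
          apply htb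
          rw [← hz0j, ← h]
        · rw [hz0j]; exact zmod3_ne_pm (Ne.symm htb)
        · intro k hk
          rw [hz0k k hk]; exact (hrest k hk).symm
    rw [hset, Set.ncard_singleton]
end

section
/- For n ≥ 2 and k ≥ 3, the vertex connectivity of the k-ary n-cube equals 2n: κ(Q_n^k) = 2n. -/
open SimpleGraph

def AReach {V : Type*} (G : SimpleGraph V) (F : Set V) (u v : V) : Prop :=
  ∃ w : G.Walk u v, ∀ x ∈ w.support, x ∉ F

namespace AReach
variable {V : Type*} {G : SimpleGraph V} {F : Set V} {u v x : V}

lemma refl (hu : u ∉ F) : AReach G F u u :=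
  ⟨Walk.nil, by simp [hu]⟩

lemma symm (h : AReach G F u v) : AReach G F v u := by
  obtain ⟨w, hw⟩ := h
  exact ⟨w.reverse, by simpa [Walk.support_reverse] using hw⟩

lemma trans (h : AReach G F u v) (h' : AReach G F v x) : AReach G F u x := by
  obtain ⟨w, hw⟩ := h; obtain ⟨w', hw'⟩ := h'
  refine ⟨w.append w', fun y hy => ?_⟩
  rcases (Walk.mem_support_append_iff _ _).1 hy with h | h
  · exact hw y h
  · exact hw' y h

lemma of_adj (h : G.Adj u v) (hu : u ∉ F) (hv : v ∉ F) : AReach G F u v :=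
  ⟨Walk.cons h Walk.nil, by simp [hu, hv]⟩

end AReach

lemma reachable_induce_of_AReach {V : Type*} {G : SimpleGraph V} {s : Set V} {u v : V}
    (h : AReach G sᶜ u v) (hu : u ∈ s) (hv : v ∈ s) :
    (G.induce s).Reachable ⟨u, hu⟩ ⟨v, hv⟩ := by
  obtain ⟨w, hw⟩ := h
  induction w with
  | nil => exact Reachable.refl _
  | @cons a b c hab p ih =>
    have hb : b ∈ s := by
      have := hw b (by simp)
      simpa using this
    have hstep : (G.induce s).Adj ⟨a, hu⟩ ⟨b, hb⟩ := by
      simp only [comap_adj, Function.Embedding.coe_subtype]; exact hab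
    exact (Adj.reachable hstep).trans (ih hb hv (fun x hx => hw x (by simp [hx])))

variable {n k : ℕ}

lemma one_ne_zero'' {k : ℕ} (hk : 3 ≤ k) : (1 : ZMod k) ≠ 0 := by
  intro h
  have : ((1 : ℕ) : ZMod k) = 0 := by exact_mod_cast h
  rw [ZMod.natCast_eq_zero_iff] at this
  exact absurd (Nat.le_of_dvd one_pos this) (by omega)

lemma qcube_adj (hk : 3 ≤ k) {u v : Fin n → ZMod k} (j : Fin n)
    (hj : u j = v j + 1 ∨ u j = v j - 1) (hrest : ∀ i ≠ j, u i = v i) :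
    (QCube n k).Adj u v := by
  refine ⟨fun h => ?_, j, hj, hrest⟩
  subst h
  rcases hj with h | h
  · exact one_ne_zero'' hk (by linear_combination -h)
  · exact one_ne_zero'' hk (by linear_combination h)

lemma d_ne_zero {k : ℕ} (hk : 3 ≤ k) {d : ZMod k} (hd : d = 1 ∨ d = -1) : d ≠ 0 := by
  rcases hd with rfl | rfl
  · exact one_ne_zero'' hk
  · intro h; exact one_ne_zero'' hk (by linear_combination -h)

lemma lineWalk (hk : 3 ≤ k) (j : Fin n) (d : ZMod k) (hd : d = 1 ∨ d = -1) :
    ∀ (L : ℕ) (u : Fin n → ZMod k),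
    ∃ w : (QCube n k).Walk u (u + Pi.single j ((L : ZMod k) * d)),
      ∀ x ∈ w.support, ∃ i : ℕ, i ≤ L ∧ x = u + Pi.single j ((i : ZMod k) * d) := by
  intro L
  induction L with
  | zero =>
    intro u
    refine ⟨Walk.nil.copy rfl (by simp), fun x hx => ⟨0, le_refl 0, ?_⟩⟩
    simp only [Walk.support_copy, Walk.support_nil, List.mem_singleton] at hx
    simp [hx]
  | succ L ih =>
    intro u
    set u' := u + Pi.single j d with hu'
    have hadj : (QCube n k).Adj u u' := by
      apply qcube_adj hk j
      · have hj' : u' j = u j + d := by simp [hu']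
        rcases hd with rfl | rfl
        · right; rw [hj']; ring
        · left; rw [hj']; ring
      · intro i hi
        simp [hu', Pi.single_eq_of_ne hi]
    obtain ⟨w0, hw0⟩ := ih u'
    have hend : u' + Pi.single j ((L : ZMod k) * d) = u + Pi.single j (((L+1 : ℕ) : ZMod k) * d) := by
      rw [hu', add_assoc, ← Pi.single_add]
      push_cast
      ring_nf
    refine ⟨(Walk.cons hadj w0).copy rfl hend, fun x hx => ?_⟩
    simp only [Walk.support_copy, Walk.support_cons, List.mem_cons] at hx
    rcases hx with rfl | hx
    · exact ⟨0, by omega, by simp⟩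
    · obtain ⟨i, hi, hxi⟩ := hw0 x hx
      refine ⟨i + 1, by omega, ?_⟩
      rw [hxi, hu', add_assoc, ← Pi.single_add]
      push_cast
      ring_nf

lemma natCast_val_self {k : ℕ} [NeZero k] (a : ZMod k) : ((a.val : ℕ) : ZMod k) = a :=
  ZMod.natCast_rightInverse a

lemma cycleReach (hk : 3 ≤ k) (j : Fin n) (F : Set (Fin n → ZMod k))
    (hF : F.ncard ≤ 1) {u v : Fin n → ZMod k} (hu : u ∉ F) (hv : v ∉ F)
    (huv : ∀ i ≠ j, u i = v i) : AReach (QCube n k) F u v := by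
  haveI : NeZero k := ⟨by omega⟩
  set a := v j - u j with ha
  have hveq : v = u + Pi.single j a := by
    funext i
    by_cases hij : i = j
    · subst hij; simp [ha]
    · simp [Pi.single_eq_of_ne hij, (huv i hij).symm]
  set L := a.val with hL
  have hLk : L < k := ZMod.val_lt a
  -- plus walk
  obtain ⟨wp, hwp⟩ := lineWalk hk j 1 (Or.inl rfl) L u
  have hpend : u + Pi.single j ((L : ZMod k) * 1) = v := by
    rw [hveq, mul_one, hL, natCast_val_self]
  -- minus walk
  obtain ⟨wm, hwm⟩ := lineWalk hk j (-1) (Or.inr rfl) (k - L) u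
  have hmend : u + Pi.single j (((k - L : ℕ) : ZMod k) * (-1)) = v := by
    rw [hveq]
    congr 1
    congr 1
    have : ((k - L : ℕ) : ZMod k) = -(L : ZMod k) := by
      have : ((k : ℕ) : ZMod k) = 0 := ZMod.natCast_self k
      push_cast [Nat.cast_sub (le_of_lt hLk)]
      rw [this]; ring
    rw [this, hL, natCast_val_self]; ring
  -- one of the two avoids F
  by_cases hp : ∀ x ∈ wp.support, x ∉ F
  · exact ⟨wp.copy rfl hpend, by simpa [Walk.support_copy] using hp⟩
  by_cases hm : ∀ x ∈ wm.support, x ∉ F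
  · exact ⟨wm.copy rfl hmend, by simpa [Walk.support_copy] using hm⟩
  exfalso
  push_neg at hp hm
  obtain ⟨x, hxs, hxF⟩ := hp
  obtain ⟨y, hys, hyF⟩ := hm
  obtain ⟨i, hiL, hxi⟩ := hwp x hxs
  obtain ⟨i', hiL', hyi⟩ := hwm y hys
  have hxy : x = y := by
    have h2 : ∀ p ∈ F, ∀ q ∈ F, p = q := (Set.ncard_le_one (Set.toFinite F)).1 hF
    exact h2 x hxF y hyF
  have hcoord : ((i : ZMod k)) = -(i' : ZMod k) := by
    have := congrFun (hxi ▸ hxy ▸ hyi.symm).symm j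
    simpa using this
  have hdvd : (k : ℕ) ∣ i + i' := by
    have : ((i + i' : ℕ) : ZMod k) = 0 := by push_cast; rw [hcoord]; ring
    exact (ZMod.natCast_eq_zero_iff _ _).1 this
  have hsum : i + i' ≤ k := by omega
  rcases Nat.eq_zero_or_pos (i + i') with h0 | hpos
  · -- x = u
    have : x = u := by
      rw [hxi]; have : i = 0 := by omega
      simp [this]
    exact hu (this ▸ hxF)
  · have hgek : k ≤ i + i' := Nat.le_of_dvd hpos hdvd
    have hik : i + i' = k := by omega
    have hiL2 : i = L := by omega
    have : x = v := by rw [hxi, hiL2, mul_one, hL, natCast_val_self, ← hveq]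
    exact hv (this ▸ hxF)

lemma snoc_left_injective {n : ℕ} {α : Type*} (c : α) :
    Function.Injective (fun x : Fin n → α => (Fin.snoc x c : Fin (n+1) → α)) := by
  intro x y h
  funext i
  have := congrFun h i.castSucc
  simpa [Fin.snoc_castSucc] using this

def layerHom (hk : 3 ≤ k) (c : ZMod k) : QCube n k →g QCube (n+1) k where
  toFun := fun x => Fin.snoc x c
  map_rel' := by
    rintro u v ⟨hne, j, hj, hrest⟩
    refine ⟨fun h => hne (snoc_left_injective c h), j.castSucc, ?_, ?_⟩
    · simpa [Fin.snoc_castSucc] using hj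
    · intro i
      refine Fin.lastCases ?_ (fun i' => ?_) i
      · intro _
        simp [Fin.snoc_last]
      · intro hi'
        have : i' ≠ j := by
          intro h; exact hi' (by rw [h])
        simp [Fin.snoc_castSucc, hrest i' this]

lemma cross_adj (hk : 3 ≤ k) (x : Fin n → ZMod k) (c : ZMod k) :
    (QCube (n+1) k).Adj (Fin.snoc x c) (Fin.snoc x (c+1)) := by
  apply qcube_adj hk (Fin.last n)
  · right
    simp only [Fin.snoc_last]
    ring
  · intro i
    refine Fin.lastCases ?_ (fun i' => ?_) i
    · intro h; exact absurd rfl h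
    · intro _
      simp [Fin.snoc_castSucc]

lemma layer_ncard_sum [NeZero k] (F : Set (Fin (n+1) → ZMod k)) :
    ∑ c : ZMod k, ({x : Fin n → ZMod k | Fin.snoc x c ∈ F}).ncard = F.ncard := by
  classical
  have hFfin : F.Finite := Set.toFinite F
  set Fs := hFfin.toFinset with hFs
  have hcard : F.ncard = Fs.card := Set.ncard_eq_toFinset_card F hFfin
  have hsum : Fs.card = ∑ c : ZMod k, (Fs.filter (fun w => w (Fin.last n) = c)).card :=
    Finset.card_eq_sum_card_fiberwise (by simp)
  rw [hcard, hsum]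
  refine Finset.sum_congr rfl (fun c _ => ?_)
  have himg : (fun x : Fin n → ZMod k => (Fin.snoc x c : Fin (n+1) → ZMod k)) ''
      {x : Fin n → ZMod k | Fin.snoc x c ∈ F} =
      ↑(Fs.filter (fun w => w (Fin.last n) = c)) := by
    ext w
    simp only [Set.mem_image, Set.mem_setOf_eq, Finset.coe_filter, Set.Finite.mem_toFinset, hFs]
    constructor
    · rintro ⟨x, hx, rfl⟩
      exact ⟨hx, by simp [Fin.snoc_last]⟩
    · rintro ⟨hw, hwc⟩
      refine ⟨Fin.init w, ?_, ?_⟩ <;> rw [← hwc, Fin.snoc_init_self] <;> exact hw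
  calc ({x : Fin n → ZMod k | Fin.snoc x c ∈ F}).ncard
      = ((fun x : Fin n → ZMod k => (Fin.snoc x c : Fin (n+1) → ZMod k)) ''
        {x : Fin n → ZMod k | Fin.snoc x c ∈ F}).ncard :=
        (Set.ncard_image_of_injective _ (snoc_left_injective c)).symm
    _ = (Fs.filter (fun w => w (Fin.last n) = c)).card := by
        rw [himg, Set.ncard_coe_finset]

lemma ncard_univ_cube [NeZero k] :
    (Set.univ : Set (Fin n → ZMod k)).ncard = k ^ n := by
  rw [Set.ncard_univ, Nat.card_eq_fintype_card, Fintype.card_fun, ZMod.card, Fintype.card_fin]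

lemma bridge_exists [NeZero k] (F : Set (Fin (n+1) → ZMod k)) (c c' : ZMod k)
    (h : ({x : Fin n → ZMod k | Fin.snoc x c ∈ F}).ncard
       + ({x : Fin n → ZMod k | Fin.snoc x c' ∈ F}).ncard < k ^ n) :
    ∃ x : Fin n → ZMod k, Fin.snoc x c ∉ F ∧ Fin.snoc x c' ∉ F := by
  by_contra hcon
  push_neg at hcon
  have huniv : (Set.univ : Set (Fin n → ZMod k)) ⊆
      {x : Fin n → ZMod k | Fin.snoc x c ∈ F} ∪ {x : Fin n → ZMod k | Fin.snoc x c' ∈ F} := by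
    intro x _
    by_cases hx : Fin.snoc x c ∈ F
    · exact Or.inl hx
    · exact Or.inr (hcon x hx)
  have h1 : (k : ℕ) ^ n ≤ _ := ncard_univ_cube (k := k) (n := n) ▸
    Set.ncard_le_ncard huniv (Set.toFinite _)
  have h2 := Set.ncard_union_le {x : Fin n → ZMod k | Fin.snoc x c ∈ F}
    {x : Fin n → ZMod k | Fin.snoc x c' ∈ F}
  omega

lemma survivor_exists [NeZero k] (F : Set (Fin (n+1) → ZMod k)) (c : ZMod k)
    (h : ({x : Fin n → ZMod k | Fin.snoc x c ∈ F}).ncard < k ^ n) :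
    ∃ x : Fin n → ZMod k, Fin.snoc x c ∉ F := by
  by_contra hcon
  push_neg at hcon
  have : (Set.univ : Set (Fin n → ZMod k)) ⊆ {x : Fin n → ZMod k | Fin.snoc x c ∈ F} :=
    fun x _ => hcon x
  have h1 : (k : ℕ) ^ n ≤ _ := ncard_univ_cube (k := k) (n := n) ▸
    Set.ncard_le_ncard this (Set.toFinite _)
  omega

lemma layerReach (hk : 3 ≤ k) (F : Set (Fin (n+1) → ZMod k)) (c : ZMod k)
    (key_n : ∀ F' : Set (Fin n → ZMod k), F'.ncard ≤ 2*n - 1 →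
      ∀ x y : Fin n → ZMod k, x ∉ F' → y ∉ F' → AReach (QCube n k) F' x y)
    (hc : ({x : Fin n → ZMod k | Fin.snoc x c ∈ F}).ncard ≤ 2*n - 1)
    {u v : Fin (n+1) → ZMod k} (hu : u ∉ F) (hv : v ∉ F)
    (huc : u (Fin.last n) = c) (hvc : v (Fin.last n) = c) :
    AReach (QCube (n+1) k) F u v := by
  set F' : Set (Fin n → ZMod k) := {x : Fin n → ZMod k | Fin.snoc x c ∈ F} with hF'
  have hsu : (Fin.snoc (Fin.init u) c : Fin (n+1) → ZMod k) = u := by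
    rw [← huc]; exact Fin.snoc_init_self u
  have hsv : (Fin.snoc (Fin.init v) c : Fin (n+1) → ZMod k) = v := by
    rw [← hvc]; exact Fin.snoc_init_self v
  have hxu : Fin.init u ∉ F' := by simp only [hF', Set.mem_setOf_eq, hsu]; exact hu
  have hxv : Fin.init v ∉ F' := by simp only [hF', Set.mem_setOf_eq, hsv]; exact hv
  obtain ⟨w, hw⟩ := key_n F' hc (Fin.init u) (Fin.init v) hxu hxv
  refine ⟨(Walk.map (layerHom hk c) w).copy hsu hsv, fun x hx => ?_⟩
  rw [show ((Walk.map (layerHom hk c) w).copy hsu hsv).support = (Walk.map (layerHom hk c) w).support from Walk.support_copy _ _ _, Walk.support_map, List.mem_map] at hx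
  obtain ⟨y, hy, rfl⟩ := hx
  exact hw y hy

lemma two_mul_add_one_lt : ∀ m : ℕ, 2 ≤ m → 2*m+1 < 3^m := by
  intro m hm
  induction m with
  | zero => omega
  | succ m ih =>
    rcases Nat.lt_or_ge m 2 with h | h
    · interval_cases m
      · omega
      · norm_num
    · have h3 : 2*m+1 < 3^m := ih h
      have : 3^(m+1) = 3*3^m := by ring
      omega
lemma key_reach {k : ℕ} (hk : 3 ≤ k) : ∀ n : ℕ, 1 ≤ n →
    ∀ F : Set (Fin n → ZMod k), F.ncard ≤ 2*n - 1 →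
    ∀ u v : Fin n → ZMod k, u ∉ F → v ∉ F → AReach (QCube n k) F u v := by
  intro n hn
  induction n, hn using Nat.le_induction with
  | base =>
    intro F hF u v hu hv
    exact cycleReach hk (0 : Fin 1) F (by omega) hu hv
      (fun i hi => absurd (Subsingleton.elim i 0) hi)
  | succ n hn IH =>
    intro F hF u v hu hv
    haveI : NeZero k := ⟨by omega⟩
    classical
    set f : ZMod k → ℕ := fun c => ({x : Fin n → ZMod k | Fin.snoc x c ∈ F}).ncard with hfdef
    have hsum : ∑ c : ZMod k, f c = F.ncard := layer_ncard_sum F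
    have htot : ∑ c : ZMod k, f c ≤ 2*n + 1 := by rw [hsum]; omega
    have hpairsum : ∀ c c' : ZMod k, c ≠ c' → f c + f c' ≤ 2*n + 1 := by
      intro c c' hne
      have hsub : ({c, c'} : Finset (ZMod k)) ⊆ Finset.univ := Finset.subset_univ _
      have := Finset.sum_le_sum_of_subset (f := f) hsub
      rw [Finset.sum_pair hne] at this
      omega
    have htriplesum : ∀ c c' c'' : ZMod k, c ≠ c' → c ≠ c'' → c' ≠ c'' →
        f c + f c' + f c'' ≤ 2*n + 1 := by
      intro c c' c'' h1 h2 h3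
      have hsub : ({c, c', c''} : Finset (ZMod k)) ⊆ Finset.univ := Finset.subset_univ _
      have hle := Finset.sum_le_sum_of_subset (f := f) hsub
      rw [Finset.sum_insert (by simp [h1, h2]), Finset.sum_pair h3] at hle
      omega
    have hkn : 3 ^ n ≤ k ^ n := Nat.pow_le_pow_left (by omega) n
    have h3n : 3 ≤ 3 ^ n := by
      calc 3 = 3^1 := by norm_num
      _ ≤ 3^n := Nat.pow_le_pow_right (by norm_num) hn
    have hkn3 : 3 ≤ k ^ n := le_trans h3n hkn
    have hpairlt : ∀ c c' : ZMod k, c ≠ c' → f c ≤ 2*n - 1 → f c' ≤ 2*n - 1 →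
        f c + f c' < k ^ n := by
      intro c c' hne h1 h2
      rcases Nat.lt_or_ge n 2 with hn2 | hn2
      · have : n = 1 := by omega
        subst this
        omega
      · have := two_mul_add_one_lt n hn2
        have := hpairsum c c' hne
        omega
    -- inner layer connectivity
    have inner : ∀ c : ZMod k, f c ≤ 2*n - 1 → ∀ {a b : Fin (n+1) → ZMod k},
        a ∉ F → b ∉ F → a (Fin.last n) = c → b (Fin.last n) = c →
        AReach (QCube (n+1) k) F a b := by
      intro c hc a b ha hb hac hbc
      exact layerReach hk F c (fun F' hF' x y hx hy => IH F' hF' x y hx hy) hc ha hb hac hbc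
    have hone : (1 : ZMod k) ≠ 0 := one_ne_zero'' hk
    by_cases hb : ∀ c : ZMod k, f c ≤ 2*n - 1
    · -- case (b): all layers light
      have chain : ∀ t : ℕ, ∀ w : Fin (n+1) → ZMod k, w ∉ F →
          w (Fin.last n) = u (Fin.last n) + (t : ZMod k) →
          AReach (QCube (n+1) k) F u w := by
        intro t
        induction t with
        | zero =>
          intro w hw hwc
          exact inner (u (Fin.last n)) (hb _) hu hw rfl (by simpa using hwc)
        | succ t ih =>
          intro w hw hwc
          set c : ZMod k := u (Fin.last n) + (t : ZMod k) with hc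
          set c' : ZMod k := u (Fin.last n) + ((t+1 : ℕ) : ZMod k) with hc'
          have hcc' : c' = c + 1 := by rw [hc, hc']; push_cast; ring
          have hne : c ≠ c' := by
            rw [hcc']; intro h; exact hone (by linear_combination -h)
          obtain ⟨x, hx1, hx2⟩ := bridge_exists F c c' (hpairlt c c' hne (hb c) (hb c'))
          have h1 : AReach (QCube (n+1) k) F u (Fin.snoc x c) :=
            ih _ hx1 (by simp [Fin.snoc_last, hc])
          have hadj : (QCube (n+1) k).Adj (Fin.snoc x c) (Fin.snoc x c') := by
            rw [hcc']; exact cross_adj hk x c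
          have h3 : AReach (QCube (n+1) k) F (Fin.snoc x c') w :=
            inner c' (hb c') hx2 hw (by simp [Fin.snoc_last]) hwc
          exact h1.trans ((AReach.of_adj hadj hx1 hx2).trans h3)
      refine chain ((v (Fin.last n) - u (Fin.last n)).val) v hv ?_
      rw [natCast_val_self]; ring
    · -- case (a): a heavy layer c₀
      push_neg at hb
      obtain ⟨c₀, hc₀⟩ := hb
      have hheavy : 2*n ≤ f c₀ := by omega
      have hlight : ∀ c : ZMod k, c ≠ c₀ → f c ≤ 1 := by
        intro c hc
        have := hpairsum c c₀ hc
        omega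
      have hlightpair : ∀ c c' : ZMod k, c ≠ c' → c ≠ c₀ → c' ≠ c₀ → f c + f c' ≤ 1 := by
        intro c c' h1 h2 h3
        have := htriplesum c₀ c c' (Ne.symm h2) (Ne.symm h3) h1
        omega
      have hcast : ∀ t : ℕ, 1 ≤ t → t ≤ k - 1 → ((t : ℕ) : ZMod k) ≠ 0 := by
        intro t h1 h2 h
        rw [ZMod.natCast_eq_zero_iff] at h
        have := Nat.le_of_dvd (by omega) h
        omega
      have haddne : ∀ t : ℕ, 1 ≤ t → t ≤ k - 1 → c₀ + (t : ZMod k) ≠ c₀ := by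
        intro t h1 h2 h
        exact hcast t h1 h2 (by linear_combination h)
      -- survivor in layer c₀ + 1
      have hs1 : c₀ + ((1:ℕ) : ZMod k) ≠ c₀ := haddne 1 le_rfl (by omega)
      obtain ⟨x₀, hx₀⟩ := survivor_exists F (c₀ + 1)
        (by show f (c₀ + 1) < k ^ n
            have := hlight (c₀ + 1) (by simpa using hs1); omega)
      set w₀ : Fin (n+1) → ZMod k := Fin.snoc x₀ (c₀ + 1) with hw₀
      have hw₀F : w₀ ∉ F := hx₀
      have hw₀c : w₀ (Fin.last n) = c₀ + 1 := by simp [hw₀, Fin.snoc_last]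
      have hlight' : ∀ c : ZMod k, c ≠ c₀ → f c ≤ 2*n - 1 := by
        intro c hc; have := hlight c hc; omega
      -- chain through light layers
      have chain2 : ∀ t : ℕ, 1 ≤ t → t ≤ k - 1 → ∀ w : Fin (n+1) → ZMod k, w ∉ F →
          w (Fin.last n) = c₀ + (t : ZMod k) → AReach (QCube (n+1) k) F w₀ w := by
        intro t ht1
        induction t, ht1 using Nat.le_induction with
        | base =>
          intro _ w hw hwc
          refine inner (c₀ + 1) (hlight' _ (by simpa using hs1)) hw₀F hw hw₀c ?_
          simpa using hwc
        | succ t ht ih =>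
          intro htk w hw hwc
          have htk' : t ≤ k - 1 := by omega
          set c : ZMod k := c₀ + (t : ZMod k) with hc
          set c' : ZMod k := c₀ + ((t+1 : ℕ) : ZMod k) with hc'
          have hcc' : c' = c + 1 := by rw [hc, hc']; push_cast; ring
          have hne : c ≠ c' := by
            rw [hcc']; intro h; exact hone (by linear_combination -h)
          have hcne : c ≠ c₀ := haddne t ht htk'
          have hc'ne : c' ≠ c₀ := haddne (t+1) (by omega) htk
          obtain ⟨x, hx1, hx2⟩ := bridge_exists F c c'
            (by show f c + f c' < k ^ n
                have := hlightpair c c' hne hcne hc'ne; omega)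
          have h1 : AReach (QCube (n+1) k) F w₀ (Fin.snoc x c) :=
            ih htk' _ hx1 (by simp [Fin.snoc_last, hc])
          have hadj : (QCube (n+1) k).Adj (Fin.snoc x c) (Fin.snoc x c') := by
            rw [hcc']; exact cross_adj hk x c
          have h3 : AReach (QCube (n+1) k) F (Fin.snoc x c') w :=
            inner c' (hlight' c' hc'ne) hx2 hw (by simp [Fin.snoc_last]) hwc
          exact h1.trans ((AReach.of_adj hadj hx1 hx2).trans h3)
      -- every survivor reaches w₀
      have attach : ∀ w : Fin (n+1) → ZMod k, w ∉ F → AReach (QCube (n+1) k) F w₀ w := by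
        intro w hw
        by_cases hcc : w (Fin.last n) = c₀
        · -- w in the heavy layer
          set x : Fin n → ZMod k := Fin.init w with hx
          have hwx : (Fin.snoc x c₀ : Fin (n+1) → ZMod k) = w := by
            rw [hx, ← hcc]; exact Fin.snoc_init_self w
          have hkm1 : ((k - 1 : ℕ) : ZMod k) = -1 := by
            push_cast [Nat.cast_sub (by omega : 1 ≤ k)]
            rw [ZMod.natCast_self]; ring
          have hnotboth : Fin.snoc x (c₀ + 1) ∉ F ∨
              Fin.snoc x (c₀ + ((k-1 : ℕ) : ZMod k)) ∉ F := by
            by_contra hcon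
            push_neg at hcon
            obtain ⟨hp, hm⟩ := hcon
            have hne : c₀ + 1 ≠ c₀ + ((k-1 : ℕ) : ZMod k) := by
              rw [hkm1]; intro h
              have h2 : (2 : ZMod k) = 0 := by linear_combination h
              have : ((2:ℕ) : ZMod k) = 0 := by exact_mod_cast h2
              rw [ZMod.natCast_eq_zero_iff] at this
              have := Nat.le_of_dvd (by omega) this
              omega
            have hfp : 1 ≤ f (c₀ + 1) :=
              (Set.ncard_pos (Set.toFinite _)).2 ⟨x, hp⟩
            have hfm : 1 ≤ f (c₀ + ((k-1 : ℕ) : ZMod k)) :=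
              (Set.ncard_pos (Set.toFinite _)).2 ⟨x, hm⟩
            have := hlightpair (c₀ + 1) (c₀ + ((k-1 : ℕ) : ZMod k)) hne
              (by simpa using hs1) (haddne (k-1) (by omega) le_rfl)
            omega
          rcases hnotboth with hp | hm
          · have hadj : (QCube (n+1) k).Adj w (Fin.snoc x (c₀ + 1)) := by
              rw [← hwx]; exact cross_adj hk x c₀
            have h1 : AReach (QCube (n+1) k) F w₀ (Fin.snoc x (c₀ + 1)) :=
              chain2 1 le_rfl (by omega) _ hp (by simp [Fin.snoc_last])
            exact h1.trans ((AReach.of_adj hadj hw hp).symm)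
          · have hadj : (QCube (n+1) k).Adj (Fin.snoc x (c₀ + ((k-1:ℕ) : ZMod k))) w := by
              have hstep := cross_adj hk x (c₀ + ((k-1:ℕ) : ZMod k))
              have heq : c₀ + ((k-1:ℕ) : ZMod k) + 1 = c₀ := by rw [hkm1]; ring
              rw [heq] at hstep
              rwa [hwx] at hstep
            have h1 : AReach (QCube (n+1) k) F w₀ (Fin.snoc x (c₀ + ((k-1:ℕ) : ZMod k))) :=
              chain2 (k-1) (by omega) le_rfl _ hm (by simp [Fin.snoc_last])
            exact h1.trans (AReach.of_adj hadj hm hw)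
        · -- w in a light layer
          set t : ℕ := (w (Fin.last n) - c₀).val with ht
          have htne : w (Fin.last n) - c₀ ≠ 0 := sub_ne_zero.2 hcc
          have ht1 : 1 ≤ t := by
            rcases Nat.eq_zero_or_pos t with h | h
            · exfalso; exact htne ((ZMod.val_eq_zero _).1 h)
            · omega
          have htk : t ≤ k - 1 := by
            have := ZMod.val_lt (w (Fin.last n) - c₀)
            omega
          refine chain2 t ht1 htk w hw ?_
          rw [ht, natCast_val_self]; ring
      exact (attach u hu).symm.trans (attach v hv)
lemma exists_adj_of_reachable {V : Type*} {G : SimpleGraph V} {u v : V}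
    (h : G.Reachable u v) (hne : u ≠ v) : ∃ x, G.Adj u x := by
  obtain ⟨p⟩ := h
  cases p with
  | nil => exact absurd rfl hne
  | cons h _ => exact ⟨_, h⟩

theorem stmt9 (n k : ℕ) (hn : 2 ≤ n) (hk : 3 ≤ k) :
    vConn (QCube n k) = 2 * n := by
  haveI : NeZero k := ⟨by omega⟩
  classical
  have hone : (1 : ZMod k) ≠ 0 := one_ne_zero'' hk
  have h2 : (2 : ZMod k) ≠ 0 := by
    intro h
    have : ((2:ℕ) : ZMod k) = 0 := by exact_mod_cast h
    rw [ZMod.natCast_eq_zero_iff] at this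
    have := Nat.le_of_dvd (by omega) this
    omega
  have hm1 : (1 : ZMod k) ≠ -1 := by
    intro h; exact h2 (by linear_combination h)
  have hmone : (-1 : ZMod k) ≠ 0 := by
    intro h; exact hone (by linear_combination -h)
  have hcardV : Nat.card (Fin n → ZMod k) = k ^ n := by
    rw [Nat.card_eq_fintype_card, Fintype.card_fun, ZMod.card, Fintype.card_fin]
  have hkn : 2*n + 1 < k ^ n := by
    have h1 := two_mul_add_one_lt n hn
    have h2 := Nat.pow_le_pow_left (show 3 ≤ k by omega) n
    omega
  set S : Set (Fin n → ZMod k) := {w | (QCube n k).Adj 0 w} with hS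
  -- characterization of S
  have hSchar : ∀ w, w ∈ S ↔ ∃ (j : Fin n) (d : ZMod k),
      (d = 1 ∨ d = -1) ∧ w = Pi.single j d := by
    intro w
    constructor
    · rintro ⟨hne, j, hj, hrest⟩
      simp only [Pi.zero_apply] at hj
      refine ⟨j, w j, ?_, ?_⟩
      · rcases hj with h | h
        · right; linear_combination -h
        · left; linear_combination -h
      · funext i
        by_cases hij : i = j
        · subst hij; simp
        · rw [Pi.single_eq_of_ne hij]
          have := hrest i hij
          simp only [Pi.zero_apply] at this
          exact this.symm
    · rintro ⟨j, d, hd, rfl⟩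
      refine qcube_adj hk j ?_ ?_
      · simp only [Pi.zero_apply, Pi.single_eq_same]
        rcases hd with rfl | rfl
        · right; ring
        · left; ring
      · intro i hij
        simp [Pi.single_eq_of_ne hij]
  -- cardinality of S
  have hScard : S.ncard = 2 * n := by
    have hSeq : S = (fun p : Fin n × Bool =>
        (Pi.single p.1 (if p.2 then (1:ZMod k) else -1) : Fin n → ZMod k)) '' Set.univ := by
      ext w
      rw [hSchar w]
      simp only [Set.image_univ, Set.mem_range]
      constructor
      · rintro ⟨j, d, hd, rfl⟩
        rcases hd with rfl | rfl
        · exact ⟨(j, true), by simp⟩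
        · exact ⟨(j, false), by simp⟩
      · rintro ⟨⟨j, b⟩, rfl⟩
        cases b
        · exact ⟨j, -1, Or.inr rfl, by simp⟩
        · exact ⟨j, 1, Or.inl rfl, by simp⟩
    have hinj : Function.Injective (fun p : Fin n × Bool =>
        (Pi.single p.1 (if p.2 then (1:ZMod k) else -1) : Fin n → ZMod k)) := by
      rintro ⟨j, b⟩ ⟨j', b'⟩ h
      simp only at h
      have hne : (if b then (1:ZMod k) else -1) ≠ 0 := by
        cases b <;> simp [hone, hmone]
      by_cases hjj : j = j'
      · subst hjj
        have hval := congrFun h j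
        simp only [Pi.single_eq_same] at hval
        cases b <;> cases b'
        · rfl
        · simp only [if_neg Bool.false_ne_true, if_pos rfl] at hval
          exact absurd hval.symm hm1
        · simp only [if_neg Bool.false_ne_true, if_pos rfl] at hval
          exact absurd hval hm1
        · rfl
      · have hval := congrFun h j
        rw [Pi.single_eq_same, Pi.single_eq_of_ne hjj] at hval
        exact absurd hval hne
    rw [hSeq, Set.ncard_image_of_injective _ hinj, Set.ncard_univ,
      Nat.card_eq_fintype_card, Fintype.card_prod, Fintype.card_fin, Fintype.card_bool]
    ring
  -- vertex 0 and the far vertex survive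
  have h0S : (0 : Fin n → ZMod k) ∈ Sᶜ := by
    intro h
    exact (QCube n k).loopless.irrefl 0 h
  set w₂ : Fin n → ZMod k := fun _ => 2 with hw₂def
  have hw₂S : w₂ ∈ Sᶜ := by
    rintro ⟨hne, j, hj, hrest⟩
    have hi0 : ((⟨0, by omega⟩ : Fin n) : Fin n) ≠ (⟨1, by omega⟩ : Fin n) := by
      intro h; simpa using congrArg Fin.val h
    have : ∃ i : Fin n, i ≠ j := by
      by_cases h0 : (⟨0, by omega⟩ : Fin n) = j
      · exact ⟨⟨1, by omega⟩, by rw [← h0]; exact (Ne.symm hi0)⟩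
      · exact ⟨⟨0, by omega⟩, h0⟩
    obtain ⟨i, hij⟩ := this
    have := hrest i hij
    simp only [Pi.zero_apply, hw₂def] at this
    exact h2 this.symm
  have h0w₂ : (0 : Fin n → ZMod k) ≠ w₂ := by
    intro h
    have := congrFun h ⟨0, by omega⟩
    simp only [Pi.zero_apply, hw₂def] at this
    exact h2 this.symm
  -- the induced graph on Sᶜ is disconnected
  have hnotconn : ¬ ((QCube n k).induce Sᶜ).Connected := by
    intro hconn
    have hreach := hconn.preconnected ⟨0, h0S⟩ ⟨w₂, hw₂S⟩
    obtain ⟨x, hx⟩ := exists_adj_of_reachable hreach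
      (by intro h; exact h0w₂ (congrArg Subtype.val h))
    have hadj : (QCube n k).Adj 0 ↑x := by
      simpa only [comap_adj, Function.Embedding.coe_subtype] using hx
    exact x.2 hadj
  -- membership of 2*n in the defining set
  have hmem : 2 * n ∈ {m | ∃ S : Set (Fin n → ZMod k), S.Finite ∧ S.ncard = m ∧
      (¬ ((QCube n k).induce Sᶜ).Connected ∨ ∃ v, Sᶜ = {v})} :=
    ⟨S, Set.toFinite S, hScard, Or.inl hnotconn⟩
  -- lower bound
  have hlb : ∀ m ∈ {m | ∃ S : Set (Fin n → ZMod k), S.Finite ∧ S.ncard = m ∧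
      (¬ ((QCube n k).induce Sᶜ).Connected ∨ ∃ v, Sᶜ = {v})}, 2 * n ≤ m := by
    rintro m ⟨T, hTfin, hTcard, hbad⟩
    by_contra hlt
    push_neg at hlt
    have hTsmall : T.ncard ≤ 2*n - 1 := by omega
    have hcompl : T.ncard + Tᶜ.ncard = k ^ n := by
      rw [← hcardV]; exact Set.ncard_add_ncard_compl T
    have hTc2 : 2 ≤ Tᶜ.ncard := by omega
    rcases hbad with hnc | ⟨v, hv⟩
    · apply hnc
      haveI hne : Nonempty ↥Tᶜ :=
        Set.nonempty_coe_sort.2 (Set.nonempty_of_ncard_ne_zero (by omega))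
      refine SimpleGraph.Connected.mk ?_
      rintro ⟨a, ha⟩ ⟨b, hb⟩
      have hAR : AReach (QCube n k) T a b :=
        key_reach hk n (by omega) T (by omega) a b ha hb
      have hAR' : AReach (QCube n k) (Tᶜ)ᶜ a b := by rwa [compl_compl]
      exact reachable_induce_of_AReach hAR' ha hb
    · rw [hv, Set.ncard_singleton] at hTc2
      omega
  -- conclude
  refine le_antisymm (Nat.sInf_le hmem) (le_csInf ⟨2*n, hmem⟩ hlb)
end

section
/- Let n ≥ 2 and 0 ≤ ℓ ≤ ⌈n/2⌉. Then for every set U of ℓ vertices of the hypercube Q_n, the survival graph Q_n ⊖ U (the subgraph induced by vertices outside the closed neighborhood N[U]) has vertex connectivity at least max{n − 2ℓ, 0}. -/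
open SimpleGraph

open Finset

abbrev Vc (n : ℕ) := Fin n → ZMod 2

lemma zmod2_ne_iff : ∀ a b : ZMod 2, a ≠ b ↔ a = b + 1 := by decide

lemma zmod2_key : ∀ a b : ZMod 2, (a = b + 1 ∨ a = b - 1) ↔ a ≠ b := by decide

lemma qadj {n : ℕ} {u v : Vc n} :
    (QCube n 2).Adj u v ↔ ∃ j, u j ≠ v j ∧ ∀ i ≠ j, u i = v i := by
  constructor
  · rintro ⟨hne, j, hj, hrest⟩
    exact ⟨j, (zmod2_key (u j) (v j)).1 hj, hrest⟩
  · rintro ⟨j, hj, hrest⟩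
    exact ⟨fun h => hj (by rw [h]), j, (zmod2_key (u j) (v j)).2 hj, hrest⟩

/-- The set of coordinates where two vertices differ. -/
def Dc {n : ℕ} (u v : Vc n) : Finset (Fin n) := univ.filter (fun i => u i ≠ v i)

lemma mem_Dc {n : ℕ} {u v : Vc n} {i : Fin n} : i ∈ Dc u v ↔ u i ≠ v i := by
  simp [Dc]

lemma Dc_eq_empty {n : ℕ} {u v : Vc n} : Dc u v = ∅ ↔ u = v := by
  constructor
  · intro h; funext i
    by_contra hi
    exact (Finset.eq_empty_iff_forall_notMem.1 h i) (mem_Dc.2 hi)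
  · intro h; subst h; simp [Dc]

lemma qadj_iff_card {n : ℕ} {u v : Vc n} :
    (QCube n 2).Adj u v ↔ (Dc u v).card = 1 := by
  rw [qadj]
  constructor
  · rintro ⟨j, hj, hrest⟩
    rw [Finset.card_eq_one]
    refine ⟨j, ?_⟩
    ext i
    simp only [mem_Dc, Finset.mem_singleton]
    constructor
    · intro hi; by_contra hij; exact hi (hrest i hij)
    · intro hi; subst hi; exact hj
  · intro h
    obtain ⟨j, hj⟩ := Finset.card_eq_one.1 h
    refine ⟨j, ?_, ?_⟩
    · have : j ∈ Dc u v := hj ▸ Finset.mem_singleton_self j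
      exact mem_Dc.1 this
    · intro i hij
      by_contra hi
      have : i ∈ Dc u v := mem_Dc.2 hi
      rw [hj, Finset.mem_singleton] at this
      exact hij this

def flipC {n : ℕ} (u : Vc n) (j : Fin n) : Vc n := Function.update u j (u j + 1)

def ballC {n : ℕ} (u : Vc n) : Finset (Vc n) := insert u (Finset.image (flipC u) Finset.univ)

lemma zmod2_succ_ne : ∀ a : ZMod 2, a + 1 ≠ a := by decide

lemma zmod2_ne_symm : ∀ a b : ZMod 2, a ≠ b → b = a + 1 := by decide

lemma mem_ballC {n : ℕ} {u v : Vc n} : v ∈ ballC u ↔ v = u ∨ (QCube n 2).Adj u v := by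
  simp only [ballC, Finset.mem_insert, Finset.mem_image, Finset.mem_univ, true_and]
  constructor
  · rintro (h | ⟨j, rfl⟩)
    · exact Or.inl h
    · refine Or.inr (qadj.2 ⟨j, ?_, ?_⟩)
      · simp only [flipC, Function.update_self]
        exact fun h => zmod2_succ_ne (u j) h.symm
      · intro i hij
        simp [flipC, Function.update_of_ne hij]
  · rintro (h | h)
    · exact Or.inl h
    · obtain ⟨j, hj, hrest⟩ := qadj.1 h
      refine Or.inr ⟨j, ?_⟩
      funext i
      by_cases hij : i = j
      · subst hij
        simp only [flipC, Function.update_self]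
        exact (zmod2_ne_symm _ _ hj).symm
      · simp only [flipC, Function.update_of_ne hij]
        exact hrest i hij

lemma card_ballC {n : ℕ} (u : Vc n) : (ballC u).card ≤ n + 1 := by
  refine le_trans (Finset.card_insert_le _ _) ?_
  have := Finset.card_image_le (s := (Finset.univ : Finset (Fin n))) (f := flipC u)
  simp only [Finset.card_univ, Fintype.card_fin] at this
  omega

/-- Fault set. -/
def faultyC {n : ℕ} (U S : Finset (Vc n)) : Finset (Vc n) := U.biUnion ballC ∪ S

/-- Step relation avoiding a fault set F. -/
def Rc {n : ℕ} (F : Finset (Vc n)) (a b : Vc n) : Prop :=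
  (QCube n 2).Adj a b ∧ a ∉ F ∧ b ∉ F

lemma card_faultyC {n : ℕ} (U S : Finset (Vc n)) :
    (faultyC U S).card ≤ U.card * (n + 1) + S.card := by
  refine le_trans (Finset.card_union_le _ _) ?_
  have h1 : (U.biUnion ballC).card ≤ U.card * (n + 1) := by
    refine le_trans Finset.card_biUnion_le ?_
    refine le_trans (Finset.sum_le_sum (fun u _ => card_ballC u)) ?_
    simp [Finset.sum_const, mul_comm]
  omega

/-- Reaching with no faults: full hypercube is connected. -/
lemma reach_adj_aux : ∀ (k n : ℕ) (x y : Vc n), (Dc x y).card ≤ k →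
    Relation.ReflTransGen (fun a b => (QCube n 2).Adj a b) x y := by
  intro k
  induction k with
  | zero =>
    intro n x y h
    have : Dc x y = ∅ := Finset.card_eq_zero.1 (Nat.le_zero.1 h)
    rw [Dc_eq_empty.1 this]
  | succ k ih =>
    intro n x y h
    by_cases hxy : x = y
    · rw [hxy]
    · obtain ⟨j, hj⟩ : (Dc x y).Nonempty := by
        rw [Finset.nonempty_iff_ne_empty]
        exact fun he => hxy (Dc_eq_empty.1 he)
      set x' := Function.update x j (y j) with hx'
      have hadj : (QCube n 2).Adj x x' := by
        refine qadj.2 ⟨j, ?_, ?_⟩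
        · simp only [hx', Function.update_self]
          exact mem_Dc.1 hj
        · intro i hij
          simp [hx', Function.update_of_ne hij]
      have hsub : Dc x' y ⊆ (Dc x y).erase j := by
        intro i hi
        have hi' := mem_Dc.1 hi
        by_cases hij : i = j
        · subst hij
          simp [hx', Function.update_self] at hi'
        · rw [Finset.mem_erase]
          refine ⟨hij, mem_Dc.2 ?_⟩
          rwa [hx', Function.update_of_ne hij] at hi'
      have hcard : (Dc x' y).card ≤ k := by
        have := Finset.card_le_card hsub
        have := Finset.card_erase_of_mem hj
        omega
      exact Relation.ReflTransGen.head hadj (ih n x' y hcard)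

lemma reach_nofault {n : ℕ} (F : Finset (Vc n)) (hF : F = ∅) (x y : Vc n) :
    Relation.ReflTransGen (Rc F) x y := by
  refine Relation.ReflTransGen.mono ?_ _ _ (reach_adj_aux (Dc x y).card n x y le_rfl)
  intro a b hab
  exact ⟨hab, by simp [hF], by simp [hF]⟩

section Split
variable {n : ℕ} (i : Fin (n + 1)) (c : ZMod 2)

lemma adj_ins_same {c : ZMod 2} {p q : Vc n} {i : Fin (n+1)} :
    (QCube (n+1) 2).Adj (i.insertNth c p) (i.insertNth c q) ↔ (QCube n 2).Adj p q := by
  rw [qadj, qadj]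
  constructor
  · rintro ⟨j, hj, hrest⟩
    have hji : j ≠ i := by
      rintro rfl
      simp [Fin.insertNth_apply_same] at hj
    obtain ⟨j', rfl⟩ := Fin.exists_succAbove_eq hji
    refine ⟨j', ?_, ?_⟩
    · simpa [Fin.insertNth_apply_succAbove] using hj
    · intro m hm
      have := hrest (i.succAbove m) (fun h => hm (Fin.succAbove_right_injective h))
      simpa [Fin.insertNth_apply_succAbove] using this
  · rintro ⟨j, hj, hrest⟩
    refine ⟨i.succAbove j, ?_, ?_⟩
    · simpa [Fin.insertNth_apply_succAbove] using hj
    · intro k hk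
      by_cases hki : k = i
      · subst hki; simp [Fin.insertNth_apply_same]
      · obtain ⟨m, rfl⟩ := Fin.exists_succAbove_eq hki
        have hm : m ≠ j := fun h => hk (by rw [h])
        simpa [Fin.insertNth_apply_succAbove] using hrest m hm

lemma succAbove_injective {i : Fin (n+1)} : Function.Injective i.succAbove :=
  Fin.succAbove_right_injective

lemma adj_ins_diff {c c' : ZMod 2} (hcc : c ≠ c') {p q : Vc n} {i : Fin (n+1)} :
    (QCube (n+1) 2).Adj (i.insertNth c p) (i.insertNth c' q) ↔ p = q := by
  rw [qadj]
  constructor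
  · rintro ⟨j, hj, hrest⟩
    have hji : j = i := by
      by_contra hji
      exact hcc (by simpa [Fin.insertNth_apply_same] using hrest i (Ne.symm hji))
    subst hji
    funext m
    have := hrest (j.succAbove m) (Fin.succAbove_ne j m)
    simpa [Fin.insertNth_apply_succAbove] using this
  · rintro rfl
    refine ⟨i, by simpa [Fin.insertNth_apply_same] using hcc, ?_⟩
    intro k hk
    obtain ⟨m, rfl⟩ := Fin.exists_succAbove_eq hk
    simp [Fin.insertNth_apply_succAbove]

def halfC (i : Fin (n+1)) (c : ZMod 2) (U : Finset (Vc (n+1))) : Finset (Vc n) :=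
  (U.filter (fun v => v i = c)).image i.removeNth

lemma mem_halfC {U : Finset (Vc (n+1))} {p : Vc n} {i : Fin (n+1)} {c : ZMod 2} :
    p ∈ halfC i c U ↔ i.insertNth c p ∈ U := by
  simp only [halfC, Finset.mem_image, Finset.mem_filter]
  constructor
  · rintro ⟨v, ⟨hv, hvi⟩, rfl⟩
    have : i.insertNth (v i) (i.removeNth v) = v := Fin.insertNth_self_removeNth i v
    rw [← hvi, this]
    exact hv
  · intro h
    exact ⟨i.insertNth c p, ⟨h, by simp [Fin.insertNth_apply_same]⟩,
      by rw [Fin.removeNth_insertNth]⟩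

lemma zmod2_cases : ∀ a : ZMod 2, a = 0 ∨ a = 1 := by decide

lemma card_halfC (U : Finset (Vc (n+1))) (i : Fin (n+1)) :
    (halfC i 0 U).card + (halfC i 1 U).card = U.card := by
  have hinj : ∀ c : ZMod 2, Set.InjOn (fun v : Vc (n+1) => i.removeNth v)
      ↑(U.filter (fun v => v i = c)) := by
    intro c v hv w hw hvw
    simp only [Finset.coe_filter, Set.mem_setOf_eq] at hv hw
    have hvw' : i.removeNth v = i.removeNth w := hvw
    have := congrArg (fun q : Vc n => @Fin.insertNth n (fun _ => ZMod 2) i c q) hvw'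
    rw [← hv.2] at this
    rw [Fin.insertNth_self_removeNth] at this
    rw [hv.2, ← hw.2, Fin.insertNth_self_removeNth] at this
    exact this
  have h0 : (halfC i 0 U).card = (U.filter (fun v => v i = 0)).card :=
    Finset.card_image_of_injOn (hinj 0)
  have h1 : (halfC i 1 U).card = (U.filter (fun v => v i = 1)).card :=
    Finset.card_image_of_injOn (hinj 1)
  rw [h0, h1]
  have := Finset.card_filter_add_card_filter_not (s := U)
    (p := fun v => v i = 0)
  rw [← this]
  congr 1
  apply Finset.card_bij (fun v _ => v)
  · intro v hv
    simp only [Finset.mem_filter] at hv ⊢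
    rcases zmod2_cases (v i) with h | h <;> simp_all
  · intro a b _ _ h; exact h
  · intro v hv
    refine ⟨v, ?_, rfl⟩
    simp only [Finset.mem_filter] at hv ⊢
    rcases zmod2_cases (v i) with h | h <;> simp_all

lemma mem_faultyC {n : ℕ} {U S : Finset (Vc n)} {v : Vc n} :
    v ∈ faultyC U S ↔ (∃ u ∈ U, v = u ∨ (QCube n 2).Adj u v) ∨ v ∈ S := by
  simp only [faultyC, Finset.mem_union, Finset.mem_biUnion]
  constructor
  · rintro (⟨u, hu, hv⟩ | h)
    · exact Or.inl ⟨u, hu, mem_ballC.1 hv⟩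
    · exact Or.inr h
  · rintro (⟨u, hu, hv⟩ | h)
    · exact Or.inl ⟨u, hu, mem_ballC.2 hv⟩
    · exact Or.inr h

lemma zmod2_add_one_ne : ∀ a : ZMod 2, a + 1 ≠ a := by decide

lemma zmod2_of_ne : ∀ a b : ZMod 2, a ≠ b → b = a + 1 := by decide

lemma faulty_ins {U S : Finset (Vc (n+1))} {p : Vc n} {i : Fin (n+1)} {c : ZMod 2} :
    i.insertNth c p ∈ faultyC U S ↔
      p ∈ faultyC (halfC i c U) (halfC i c S ∪ halfC i (c+1) U) := by
  rw [mem_faultyC, mem_faultyC]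
  simp only [Finset.mem_union, mem_halfC]
  constructor
  · rintro (⟨u, hu, hv⟩ | h)
    · -- u in U; decompose u
      have hdec : i.insertNth (u i) (i.removeNth u) = u := Fin.insertNth_self_removeNth i u
      by_cases hui : u i = c
      · left
        refine ⟨i.removeNth u, by rw [hui] at hdec; rwa [hdec], ?_⟩
        rcases hv with hv | hv
        · left
          have := congrArg i.removeNth hv
          rwa [Fin.removeNth_insertNth] at this
        · right
          rw [← hdec, hui] at hv
          exact (adj_ins_same).1 hv
      · -- u is in the other half; then insertNth c p ∈ ball u means p = removeNth u
        right; right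
        have hci : u i = c + 1 := zmod2_of_ne c (u i) (fun h => hui h.symm)
        rcases hv with hv | hv
        · exfalso
          apply hui
          have := congrArg (fun w => w i) hv
          simpa [Fin.insertNth_apply_same] using this.symm
        · rw [← hdec] at hv
          have := (adj_ins_diff (c := u i) (c' := c) hui).1 hv
          rw [← this, ← hci, hdec]
          exact hu
    · exact Or.inr (Or.inl h)
  · rintro (⟨q, hq, hv⟩ | (h | h))
    · left
      refine ⟨i.insertNth c q, hq, ?_⟩
      rcases hv with rfl | hv
      · exact Or.inl rfl
      · exact Or.inr (adj_ins_same.2 hv)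
    · exact Or.inr h
    · left
      refine ⟨i.insertNth (c+1) p, h, Or.inr ?_⟩
      exact (adj_ins_diff (zmod2_add_one_ne c)).2 rfl

end Split

lemma notmem_ball_iff {n : ℕ} {u x : Vc n} : x ∉ ballC u ↔ 2 ≤ (Dc u x).card := by
  rw [mem_ballC]
  push_neg
  rw [qadj_iff_card]
  constructor
  · rintro ⟨hne, hcard⟩
    have h0 : Dc u x ≠ ∅ := fun h => hne (Dc_eq_empty.1 h).symm
    have := Finset.card_pos.2 (Finset.nonempty_iff_ne_empty.2 h0)
    omega
  · intro h
    constructor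
    · intro h'
      rw [h', Dc_eq_empty.2 rfl] at h
      simp at h
    · omega

lemma fin2_other : ∀ j k : Fin 2, k ≠ j → k = (if j = 0 then 1 else 0) := by decide

lemma fin2_other' : ∀ j k : Fin 2, k ≠ (if j = 0 then 1 else 0) → k = j := by decide

lemma fin2_other_ne : ∀ j : Fin 2, (if j = 0 then (1 : Fin 2) else 0) ≠ j := by decide

lemma base2 (p x y : Vc 2) (hx : x ≠ p) (hy : y ≠ p) :
    Relation.ReflTransGen (Rc {p}) x y := by
  have hxm : x ∉ ({p} : Finset (Vc 2)) := by simpa using hx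
  have hym : y ∉ ({p} : Finset (Vc 2)) := by simpa using hy
  by_cases h0 : x = y
  · rw [h0]
  by_cases h1 : (QCube 2 2).Adj x y
  · exact Relation.ReflTransGen.single ⟨h1, hxm, hym⟩
  -- both coordinates differ
  have hcard : (Dc x y).card = 2 := by
    have hle : (Dc x y).card ≤ 2 := by
      have := Finset.card_le_univ (Dc x y)
      simpa using this
    have hne0 : Dc x y ≠ ∅ := fun h => h0 (Dc_eq_empty.1 h)
    have h1' : (Dc x y).card ≠ 1 := fun h => h1 (qadj_iff_card.2 h)
    have := Finset.card_pos.2 (Finset.nonempty_iff_ne_empty.2 hne0)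
    omega
  have huniv : Dc x y = Finset.univ := Finset.eq_univ_of_card _ (by simpa using hcard)
  have hdiff : ∀ k : Fin 2, x k ≠ y k := by
    intro k
    exact mem_Dc.1 (huniv ▸ Finset.mem_univ k)
  have route : ∀ j : Fin 2, Function.update x j (y j) ≠ p →
      Relation.ReflTransGen (Rc {p}) x y := by
    intro j hz
    set z := Function.update x j (y j) with hzdef
    have hzm : z ∉ ({p} : Finset (Vc 2)) := by simpa using hz
    set j' := (if j = 0 then (1 : Fin 2) else 0) with hj'
    have adj1 : (QCube 2 2).Adj x z := by
      refine qadj.2 ⟨j, ?_, ?_⟩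
      · rw [hzdef, Function.update_self]; exact hdiff j
      · intro k hk; rw [hzdef, Function.update_of_ne hk]
    have adj2 : (QCube 2 2).Adj z y := by
      refine qadj.2 ⟨j', ?_, ?_⟩
      · rw [hzdef, Function.update_of_ne (fin2_other_ne j)]
        exact hdiff j'
      · intro k hk
        have : k = j := fin2_other' j k hk
        rw [this, hzdef, Function.update_self]
    exact Relation.ReflTransGen.head ⟨adj1, hxm, hzm⟩
      (Relation.ReflTransGen.single ⟨adj2, hzm, hym⟩)
  by_cases hp1 : Function.update x 0 (y 0) = p
  · refine route 1 ?_
    intro hp2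
    have : Function.update x 0 (y 0) = Function.update x 1 (y 1) := by rw [hp1, hp2]
    have h00 := congrFun this 0
    rw [Function.update_self, Function.update_of_ne (by decide : (0 : Fin 2) ≠ 1)] at h00
    exact hdiff 0 h00.symm
  · exact route 0 hp1

lemma zmod2_ne_add_one_iff : ∀ a b : ZMod 2, a ≠ b + 1 ↔ a = b := by decide

lemma Dc_comm {n : ℕ} (x y : Vc n) : Dc x y = Dc y x := by
  ext i; simp [mem_Dc, ne_comm]

lemma base3 (u x y : Vc 3) (hx : x ∉ ballC u) (hy : y ∉ ballC u) :
    Relation.ReflTransGen (Rc (ballC u)) x y := by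
  set w : Vc 3 := fun j => u j + 1 with hw
  have hDw : ∀ z : Vc 3, Dc z w = Finset.univ \ Dc z u := by
    intro z
    ext i
    simp only [mem_Dc, Finset.mem_sdiff, Finset.mem_univ, true_and, hw]
    rw [zmod2_ne_add_one_iff]
    constructor
    · intro h hmem; exact hmem h
    · intro h; by_contra h'; exact h h' 
  have hcard3 : (Finset.univ : Finset (Fin 3)).card = 3 := by simp
  have hwgood : w ∉ ballC u := by
    rw [notmem_ball_iff]
    have : Dc u w = Finset.univ \ Dc u u := hDw u
    rw [this, Dc_eq_empty.2 rfl]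
    simp
  have key2 : ∀ z : Vc 3, z ∉ ballC u → z ≠ w → (QCube 3 2).Adj z w := by
    intro z hz hzw
    rw [qadj_iff_card, hDw z]
    have h2 : 2 ≤ (Dc u z).card := notmem_ball_iff.1 hz
    have hcc : Dc z u = Dc u z := Dc_comm z u
    have hsub : Dc z u ⊆ Finset.univ := Finset.subset_univ _
    rw [Finset.card_sdiff_of_subset hsub, hcard3, hcc]
    have hle : (Dc u z).card ≤ 3 := by
      have := Finset.card_le_univ (Dc u z); simpa using this
    have hne0 : (Dc z w).card ≠ 0 := by
      intro h
      exact hzw (Dc_eq_empty.1 (Finset.card_eq_zero.1 h))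
    rw [hDw z, Finset.card_sdiff_of_subset hsub, hcard3, hcc] at hne0
    omega
  have hxw : Relation.ReflTransGen (Rc (ballC u)) x w := by
    by_cases h : x = w
    · rw [h]
    · exact Relation.ReflTransGen.single ⟨key2 x hx h, hx, hwgood⟩
  have hwy : Relation.ReflTransGen (Rc (ballC u)) w y := by
    by_cases h : y = w
    · rw [h]
    · exact Relation.ReflTransGen.single ⟨(key2 y hy h).symm, hwgood, hy⟩
  exact hxw.trans hwy

lemma reach_lift {n : ℕ} {i : Fin (n+1)} {c : ZMod 2} {U S : Finset (Vc (n+1))}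
    {p q : Vc n}
    (h : Relation.ReflTransGen
      (Rc (faultyC (halfC i c U) (halfC i c S ∪ halfC i (c+1) U))) p q) :
    Relation.ReflTransGen (Rc (faultyC U S)) (i.insertNth c p) (i.insertNth c q) := by
  refine Relation.ReflTransGen.lift
    (fun r : Vc n => @Fin.insertNth n (fun _ => ZMod 2) i c r) ?_ _ _ h
  rintro a b ⟨hab, ha, hb⟩
  exact ⟨adj_ins_same.2 hab, fun hmem => ha (faulty_ins.1 hmem),
    fun hmem => hb (faulty_ins.1 hmem)⟩

lemma arith_aux : ∀ n : ℕ, 3 ≤ n → n * (n + 2) < 2 ^ (n + 1) := by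
  intro n hn
  induction n, hn using Nat.le_induction with
  | base => norm_num
  | succ n hn ih =>
    have h2 : 2 ^ (n + 2) = 2 * 2 ^ (n + 1) := by ring
    rw [h2]
    nlinarith

lemma arith1 (n l s : ℕ) (hn : 2 ≤ n) (hb : 2 * l + s ≤ n) (hexcl : ¬(n = 2 ∧ l = 1)) :
    l * (n + 2) + s < 2 ^ n := by
  by_cases h2 : n = 2
  · subst h2
    have hl : l = 0 := by omega
    subst hl
    simpa using by omega
  · have hn3 : 3 ≤ n := by omega
    have key : l * (n + 2) + s ≤ n * (l + 1) := by nlinarith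
    have := arith_aux n hn3
    have : 2 * (n * (l + 1)) ≤ n * (n + 2) := by nlinarith
    have h3 := arith_aux n hn3
    have hpow : 2 ^ (n + 1) = 2 * 2 ^ n := by ring
    omega

lemma zmod2_zero_add : ((0 : ZMod 2) + 1) = 1 := by decide
lemma zmod2_one_add : ((1 : ZMod 2) + 1) = 0 := by decide
lemma zmod2_zero_ne_one : (0 : ZMod 2) ≠ 1 := by decide

theorem mainP : ∀ N (U S : Finset (Vc N)), 2 * U.card + S.card + 1 ≤ N →
    ∀ x y, x ∉ faultyC U S → y ∉ faultyC U S →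
    Relation.ReflTransGen (Rc (faultyC U S)) x y := by
  intro N
  induction N using Nat.strong_induction_on with
  | _ N ih =>
  intro U S hbud x y hx hy
  have hfa : faultyC U (S \ U.biUnion ballC) = faultyC U S := by
    simp only [faultyC, Finset.union_sdiff_self_eq_union]
  rw [← hfa] at hx hy ⊢
  have hcardS : (S \ U.biUnion ballC).card ≤ S.card :=
    Finset.card_le_card Finset.sdiff_subset
  set S0 := S \ U.biUnion ballC with hS0def
  have hdisj : ∀ v ∈ S0, v ∉ U.biUnion ballC := fun v hv => (Finset.mem_sdiff.1 hv).2
  have hbud0 : 2 * U.card + S0.card + 1 ≤ N := by omega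
  by_cases hUS : U = ∅ ∧ S0 = ∅
  · exact reach_nofault _ (by simp [faultyC, hUS.1, hUS.2]) x y
  have hpos : 1 ≤ U.card + S0.card := by
    by_contra h
    push_neg at h
    have h1 : U.card = 0 ∧ S0.card = 0 := by omega
    exact hUS ⟨Finset.card_eq_zero.1 h1.1, Finset.card_eq_zero.1 h1.2⟩
  have hN2 : 2 ≤ N := by omega
  obtain ⟨n, rfl⟩ : ∃ n, N = n + 1 := ⟨N - 1, by omega⟩
  by_cases hn1 : n = 1
  · subst hn1
    have hU0 : U = ∅ := Finset.card_eq_zero.1 (by omega)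
    have hUc : U.card = 0 := by rw [hU0]; simp
    have hS1 : S0.card = 1 := by omega
    obtain ⟨p, hp⟩ := Finset.card_eq_one.1 hS1
    have hfeq : faultyC U S0 = {p} := by rw [hU0, hp]; simp [faultyC]
    rw [hfeq] at hx hy ⊢
    exact base2 p x y (by simpa using hx) (by simpa using hy)
  by_cases hB : n = 2 ∧ U.card = 1
  · obtain ⟨hn2', hU1⟩ := hB
    subst hn2'
    obtain ⟨u, hu⟩ := Finset.card_eq_one.1 hU1
    have hUc : U.card = 1 := hU1
    have hS00 : S0 = ∅ := Finset.card_eq_zero.1 (by omega)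
    have hfeq : faultyC U S0 = ballC u := by rw [hu, hS00]; simp [faultyC]
    rw [hfeq] at hx hy ⊢
    exact base3 u x y hx hy
  have hn2 : 2 ≤ n := by omega
  -- choose the splitting coordinate
  have hhalvesE : ∃ i : Fin (n+1), ∀ c : ZMod 2,
      2 * (halfC i c U).card + (halfC i c S0 ∪ halfC i (c+1) U).card + 1 ≤ n := by
    have hcU := card_halfC U
    have hcS := card_halfC S0
    by_cases hsl : 2 * U.card + S0.card + 1 ≤ n
    · refine ⟨⟨0, by omega⟩, fun c => ?_⟩
      have h1 := Finset.card_union_le (halfC ⟨0, by omega⟩ c S0) (halfC ⟨0, by omega⟩ (c+1) U)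
      rcases zmod2_cases c with h | h <;> subst h
      · rw [zmod2_zero_add] at h1 ⊢
        have := hcU ⟨0, by omega⟩
        have := hcS ⟨0, by omega⟩
        omega
      · rw [zmod2_one_add] at h1 ⊢
        have := hcU ⟨0, by omega⟩
        have := hcS ⟨0, by omega⟩
        omega
    · have htight : 2 * U.card + S0.card = n := by omega
      obtain ⟨a, ha, b, hb, hab⟩ :
          ∃ a ∈ U ∪ S0, ∃ b ∈ U ∪ S0, a ≠ b := by
        by_cases h2 : 2 ≤ U.card
        · obtain ⟨a, ha, b, hb, hab⟩ := Finset.one_lt_card.1 h2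
          exact ⟨a, Finset.mem_union_left _ ha, b, Finset.mem_union_left _ hb, hab⟩
        by_cases h2' : 2 ≤ S0.card
        · obtain ⟨a, ha, b, hb, hab⟩ := Finset.one_lt_card.1 h2'
          exact ⟨a, Finset.mem_union_right _ ha, b, Finset.mem_union_right _ hb, hab⟩
        have hB' : n ≠ 2 ∨ U.card ≠ 1 := by tauto
        have hl : U.card = 1 ∧ S0.card = 1 := by rcases hB' with h | h <;> omega
        obtain ⟨u, hu⟩ := Finset.card_eq_one.1 hl.1
        obtain ⟨v, hv⟩ := Finset.card_eq_one.1 hl.2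
        refine ⟨u, by simp [hu], v, by simp [hv], ?_⟩
        rintro rfl
        apply hdisj u (by simp [hv])
        rw [hu]
        simp only [Finset.singleton_biUnion]
        exact mem_ballC.2 (Or.inl rfl)
      obtain ⟨i, hi⟩ : ∃ i, a i ≠ b i := by
        by_contra h; push_neg at h; exact hab (funext h)
      refine ⟨i, ?_⟩
      have hhf : ∀ c : ZMod 2, 1 ≤ (halfC i c U).card + (halfC i c S0).card := by
        intro c
        have zmod2_third : ∀ p q r : ZMod 2, p ≠ q → p ≠ r → q = r := by decide
        have hfc : ∃ f, f ∈ U ∪ S0 ∧ f i = c := by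
          by_cases hac : a i = c
          · exact ⟨a, ha, hac⟩
          · exact ⟨b, hb, zmod2_third (a i) (b i) c hi hac⟩
        obtain ⟨f, hf, hfi⟩ := hfc
        have hdecf : i.insertNth c (i.removeNth f) = f := by
          rw [← hfi]; exact Fin.insertNth_self_removeNth i f
        rcases Finset.mem_union.1 hf with h | h
        · have : i.removeNth f ∈ halfC i c U := mem_halfC.2 (by rw [hdecf]; exact h)
          have := Finset.card_pos.2 ⟨_, this⟩
          omega
        · have : i.removeNth f ∈ halfC i c S0 := mem_halfC.2 (by rw [hdecf]; exact h)
          have := Finset.card_pos.2 ⟨_, this⟩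
          omega
      intro c
      have h1 := Finset.card_union_le (halfC i c S0) (halfC i (c+1) U)
      have e1 := hcU i
      have e2 := hcS i
      rcases zmod2_cases c with h | h <;> subst h
      · rw [zmod2_zero_add] at h1 ⊢
        have f0 := hhf 0
        have f1 := hhf 1
        omega
      · rw [zmod2_one_add] at h1 ⊢
        have f0 := hhf 0
        have f1 := hhf 1
        omega
  obtain ⟨i, hhalves⟩ := hhalvesE
  -- find a good cross pair
  classical
  set Bad : Finset (Vc n) := Finset.univ.filter
    (fun p => i.insertNth 0 p ∈ faultyC U S0 ∨ i.insertNth 1 p ∈ faultyC U S0) with hBad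
  have hBadcard : Bad.card ≤ (faultyC U S0).card := by
    apply Finset.card_le_card_of_injOn
      (fun p => if i.insertNth 0 p ∈ faultyC U S0 then i.insertNth 0 p else i.insertNth 1 p)
    · intro p hp
      simp only [hBad, Finset.mem_coe, Finset.mem_filter, Finset.mem_univ, true_and] at hp
      by_cases h : i.insertNth 0 p ∈ faultyC U S0
      · simpa [h] using h
      · rcases hp with h' | h'
        · exact absurd h' h
        · simpa [h] using h'
    · intro p hp q hq hpq
      simp only at hpq
      by_cases h1 : i.insertNth 0 p ∈ faultyC U S0 <;>
        by_cases h2 : i.insertNth 0 q ∈ faultyC U S0 <;>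
        simp only [h1, h2, if_pos, if_neg, if_true, if_false] at hpq
      · have := congrArg i.removeNth hpq
        rwa [Fin.removeNth_insertNth, Fin.removeNth_insertNth] at this
      · exact absurd (by
          have := congrArg (fun w => w i) hpq
          simpa [Fin.insertNth_apply_same] using this) zmod2_zero_ne_one
      · exact absurd (by
          have := congrArg (fun w => w i) hpq
          simpa [Fin.insertNth_apply_same] using this.symm) zmod2_zero_ne_one
      · have := congrArg i.removeNth hpq
        rwa [Fin.removeNth_insertNth, Fin.removeNth_insertNth] at this
  have hunivcard : (Finset.univ : Finset (Vc n)).card = 2 ^ n := by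
    rw [Finset.card_univ]
    rw [Fintype.card_fun]
    simp [ZMod.card 2]
  have harith : (faultyC U S0).card < 2 ^ n := by
    have h1 := card_faultyC U S0
    have h2 : U.card * (n + 1 + 1) + S0.card < 2 ^ n :=
      arith1 n U.card S0.card hn2 (by omega) hB
    omega
  obtain ⟨pstar, hpstar⟩ : ∃ p : Vc n, p ∉ Bad := by
    by_contra h
    push_neg at h
    have hsub : Finset.univ ⊆ Bad := fun p _ => h p
    have := Finset.card_le_card hsub
    omega
  have hp01 : i.insertNth 0 pstar ∉ faultyC U S0 ∧ i.insertNth 1 pstar ∉ faultyC U S0 := by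
    simp only [hBad, Finset.mem_filter, Finset.mem_univ, true_and, not_or] at hpstar
    exact hpstar
  have hinsgood : ∀ c : ZMod 2, i.insertNth c pstar ∉ faultyC U S0 := by
    intro c
    rcases zmod2_cases c with h | h <;> rw [h]
    exacts [hp01.1, hp01.2]
  have hxdec : i.insertNth (x i) (i.removeNth x) = x := Fin.insertNth_self_removeNth i x
  have hydec : i.insertNth (y i) (i.removeNth y) = y := Fin.insertNth_self_removeNth i y
  have hxg : i.removeNth x ∉
      faultyC (halfC i (x i) U) (halfC i (x i) S0 ∪ halfC i (x i + 1) U) := by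
    intro h
    exact hx (by rw [← hxdec]; exact faulty_ins.2 h)
  have hyg : i.removeNth y ∉
      faultyC (halfC i (y i) U) (halfC i (y i) S0 ∪ halfC i (y i + 1) U) := by
    intro h
    exact hy (by rw [← hydec]; exact faulty_ins.2 h)
  have hpg : ∀ c : ZMod 2, pstar ∉
      faultyC (halfC i c U) (halfC i c S0 ∪ halfC i (c+1) U) := by
    intro c h
    exact hinsgood c (faulty_ins.2 h)
  have IH : ∀ (c : ZMod 2) (p q : Vc n),
      p ∉ faultyC (halfC i c U) (halfC i c S0 ∪ halfC i (c+1) U) →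
      q ∉ faultyC (halfC i c U) (halfC i c S0 ∪ halfC i (c+1) U) →
      Relation.ReflTransGen
        (Rc (faultyC (halfC i c U) (halfC i c S0 ∪ halfC i (c+1) U))) p q :=
    fun c => ih n (by omega) (halfC i c U) (halfC i c S0 ∪ halfC i (c+1) U) (hhalves c)
  by_cases hxy : x i = y i
  · rw [← hxy] at hyg
    have r := IH (x i) (i.removeNth x) (i.removeNth y) hxg hyg
    have l := reach_lift (U := U) (S := S0) r
    rw [hxdec, hxy, hydec] at l
    exact l
  · have r1 := IH (x i) (i.removeNth x) pstar hxg (hpg (x i))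
    have r2 := IH (y i) pstar (i.removeNth y) (hpg (y i)) hyg
    have l1 := reach_lift (U := U) (S := S0) r1
    have l2 := reach_lift (U := U) (S := S0) r2
    have cross : Rc (faultyC U S0) (i.insertNth (x i) pstar) (i.insertNth (y i) pstar) :=
      ⟨(adj_ins_diff hxy).2 rfl, hinsgood (x i), hinsgood (y i)⟩
    have l := (l1.trans (Relation.ReflTransGen.single cross)).trans l2
    rw [hxdec, hydec] at l
    exact l

lemma aux2 (n l : ℕ) (hn : 2 ≤ n) (hl : 2 * l < n) : n + l * (n + 1) < 2 ^ n := by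
  have hsq : ∀ k, 2 ≤ k → k ^ 2 + 2 * k ≤ 2 ^ (k + 1) := by
    intro k hk
    induction k, hk using Nat.le_induction with
    | base => norm_num
    | succ k hk ih =>
      have h2 : 2 ^ (k + 2) = 2 * 2 ^ (k + 1) := by ring
      rw [h2]; nlinarith
  have h1 := hsq n hn
  have hpow : 2 ^ (n + 1) = 2 * 2 ^ n := by ring
  have hmul : 2 * (l * (n + 1)) + (n + 1) ≤ n * (n + 1) := by
    have : (2 * l + 1) * (n + 1) ≤ n * (n + 1) := Nat.mul_le_mul_right _ (by omega)
    nlinarith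
  have hY : n * (n + 1) = n ^ 2 + n := by ring
  obtain ⟨X, hX⟩ : ∃ X, l * (n + 1) = X := ⟨_, rfl⟩
  obtain ⟨Y, hYe⟩ : ∃ Y, n * (n + 1) = Y := ⟨_, rfl⟩
  obtain ⟨Z, hZ⟩ : ∃ Z, n ^ 2 = Z := ⟨_, rfl⟩
  obtain ⟨P, hP⟩ : ∃ P, 2 ^ n = P := ⟨_, rfl⟩
  have A1 : 2 * X + (n + 1) ≤ Y := by rw [← hX, ← hYe]; exact hmul
  have A2 : Y = Z + n := by rw [← hYe, ← hZ]; exact hY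
  have A3 : Z + 2 * n ≤ 2 * P := by
    rw [← hZ, ← hP]
    rw [hpow] at h1
    exact h1
  rw [hX, hP]
  omega

open SimpleGraph in
lemma transfer {n : ℕ} (F : Finset (Vc n)) (B : Set (Vc n)) (S : Set ↥B)
    (hgood : ∀ v : Vc n, v ∉ F → ∃ h : v ∈ B, (⟨v, h⟩ : ↥B) ∈ Sᶜ)
    {x : Vc n} (px : ↥(Sᶜ)) (hpx : ((px : ↥B) : Vc n) = x) :
    ∀ {y : Vc n}, Relation.ReflTransGen (Rc F) x y →
      ∀ (py : ↥(Sᶜ)), ((py : ↥B) : Vc n) = y →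
      (((QCube n 2).induce B).induce Sᶜ).Reachable px py := by
  intro y h
  induction h with
  | refl =>
    intro py hpy
    have : px = py := Subtype.ext (Subtype.ext (hpx.trans hpy.symm))
    rw [this]
  | @tail b c hxb hbc ihr =>
    intro py hpy
    have hbF : b ∉ F := hbc.2.1
    obtain ⟨hbB, hbS⟩ := hgood b hbF
    have rb := ihr ⟨⟨b, hbB⟩, hbS⟩ rfl
    have adj : (((QCube n 2).induce B).induce Sᶜ).Adj ⟨⟨b, hbB⟩, hbS⟩ py := by
      show (QCube n 2).Adj b ((py : ↥B) : Vc n)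
      rw [hpy]
      exact hbc.1
    exact rb.trans adj.reachable


theorem stmt10 (n ℓ : ℕ) (hn : 2 ≤ n) (hl : ℓ ≤ (n + 1) / 2)
    (U : Set (Fin n → ZMod 2)) (hU : U.ncard = ℓ) :
    n - 2 * ℓ ≤ vConn (survival (QCube n 2) U) := by
  classical
  by_cases hc : n ≤ 2 * ℓ
  · have h0 : n - 2 * ℓ = 0 := by omega
    rw [h0]
    exact Nat.zero_le _
  push_neg at hc
  set A : Set (Vc n) := closedNbhd (QCube n 2) U with hA
  have hUfin : U.Finite := Set.toFinite U
  set UF : Finset (Vc n) := hUfin.toFinset with hUFdef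
  have hUFmem : ∀ v, v ∈ UF ↔ v ∈ U := fun v => Set.Finite.mem_toFinset _
  have hUFcard : UF.card = ℓ := by
    rw [← hU]
    exact (Set.ncard_eq_toFinset_card U hUfin).symm
  have hAeq : A = ↑(UF.biUnion ballC) := by
    ext v
    simp only [hA, closedNbhd, Set.mem_union, Set.mem_setOf_eq, Finset.coe_biUnion,
      Set.mem_iUnion, Finset.mem_coe, Finset.mem_biUnion]
    constructor
    · rintro (h | ⟨u, hu, hadj⟩)
      · exact ⟨v, (hUFmem v).2 h, mem_ballC.2 (Or.inl rfl)⟩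
      · exact ⟨u, (hUFmem u).2 hu, mem_ballC.2 (Or.inr hadj)⟩
    · rintro ⟨u, hu, hball⟩
      rcases mem_ballC.1 hball with rfl | hadj
      · exact Or.inl ((hUFmem v).1 hu)
      · exact Or.inr ⟨u, (hUFmem u).1 hu, hadj⟩
  have hAcard : A.ncard ≤ ℓ * (n + 1) := by
    rw [hAeq, Set.ncard_coe_finset]
    have h := card_faultyC UF (∅ : Finset (Vc n))
    rw [Finset.card_empty] at h
    simp only [faultyC, Finset.union_empty] at h
    rw [hUFcard] at h
    omega
  have hNV : Nat.card (Vc n) = 2 ^ n := by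
    rw [Nat.card_eq_fintype_card, Fintype.card_fun]
    simp
  have hcardAc : Aᶜ.ncard + A.ncard = 2 ^ n := by
    have h := Set.ncard_add_ncard_compl A
    omega
  have haux := aux2 n ℓ hn hc
  apply le_csInf
  · refine ⟨(Set.univ : Set ↥(Aᶜ)).ncard, Set.univ, Set.toFinite _, rfl, Or.inl ?_⟩
    intro hcon
    obtain ⟨⟨w, hw⟩⟩ := hcon.nonempty
    simp at hw
  · rintro m ⟨S, hSfin, hScard, hSbad⟩
    by_contra hlt
    push_neg at hlt
    have hm1 : m + 1 + 2 * ℓ ≤ n := by omega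
    set SF : Finset (Vc n) := (Set.toFinite (Subtype.val '' S)).toFinset with hSFdef
    have hSFmem : ∀ v : Vc n, v ∈ SF ↔ ∃ s ∈ S, (s : Vc n) = v := by
      intro v
      rw [hSFdef, Set.Finite.mem_toFinset]
      simp [Set.mem_image]
    have hSFcard : SF.card = m := by
      rw [hSFdef, ← Set.ncard_eq_toFinset_card _ _,
        Set.ncard_image_of_injective S Subtype.val_injective, hScard]
    have hbudget : 2 * UF.card + SF.card + 1 ≤ n := by
      rw [hUFcard, hSFcard]; omega
    set F := faultyC UF SF with hF
    have hFcard : F.card ≤ ℓ * (n + 1) + m := by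
      have h := card_faultyC UF SF
      rw [hUFcard, hSFcard] at h
      exact h
    have key1 : ℓ * (n + 1) + m < 2 ^ n := by
      obtain ⟨L, hL⟩ : ∃ L, ℓ * (n + 1) = L := ⟨_, rfl⟩
      rw [hL] at haux ⊢
      omega
    have hgood : ∀ v : Vc n, v ∉ F → ∃ h : v ∈ Aᶜ, (⟨v, h⟩ : ↥Aᶜ) ∈ Sᶜ := by
      intro v hv
      have h1 : v ∈ Aᶜ := by
        intro hva
        rw [hAeq] at hva
        exact hv (Finset.mem_union_left _ (Finset.mem_coe.1 hva))
      refine ⟨h1, ?_⟩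
      intro hs
      apply hv
      apply Finset.mem_union_right
      exact (hSFmem v).2 ⟨⟨v, h1⟩, hs, rfl⟩
    have hexgood : ∃ x : Vc n, x ∉ F := by
      by_contra h
      push_neg at h
      have hsub : (Finset.univ : Finset (Vc n)) ⊆ F := fun p _ => h p
      have hcu : (Finset.univ : Finset (Vc n)).card = 2 ^ n := by
        rw [Finset.card_univ, Fintype.card_fun]
        simp
      have := Finset.card_le_card hsub
      omega
    obtain ⟨x0, hx0⟩ := hexgood
    obtain ⟨hx0A, hx0S⟩ := hgood x0 hx0
    rcases hSbad with hnc | ⟨v, hv⟩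
    · apply hnc
      haveI hNon : Nonempty ↥(Sᶜ) := ⟨⟨⟨x0, hx0A⟩, hx0S⟩⟩
      refine ⟨?_⟩
      intro pa pb
      have hmemgen : ∀ p : ↥(Sᶜ), ((p : ↥Aᶜ) : Vc n) ∉ F := by
        intro p hmem
        rcases Finset.mem_union.1 hmem with h | h
        · have hpA : ((p : ↥Aᶜ) : Vc n) ∈ (↑(UF.biUnion ballC) : Set (Vc n)) :=
            Finset.mem_coe.2 h
          rw [← hAeq] at hpA
          exact (p : ↥Aᶜ).2 hpA
        · obtain ⟨s, hsS, hsv⟩ := (hSFmem _).1 h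
          have : s = (p : ↥Aᶜ) := Subtype.ext hsv
          rw [this] at hsS
          exact p.2 hsS
      have hreach := mainP n UF SF hbudget _ _ (hmemgen pa) (hmemgen pb)
      exact transfer F Aᶜ S hgood pa rfl hreach pb rfl
    · have h1 : S.ncard + (Sᶜ : Set ↥Aᶜ).ncard = Nat.card ↥Aᶜ :=
        Set.ncard_add_ncard_compl S
      rw [hv, Set.ncard_singleton, hScard] at h1
      have h2 : Nat.card ↥Aᶜ = Aᶜ.ncard := Nat.card_coe_set_eq Aᶜ
      obtain ⟨L, hL⟩ : ∃ L, ℓ * (n + 1) = L := ⟨_, rfl⟩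
      rw [hL] at haux hAcard
      omega
end

section
/- Let k ≥ 3. For any single vertex v of the k-ary 2-cube Q_2^k (the k×k wrap-around torus), the graph obtained by deleting v and all its neighbors is 2-connected. -/
open SimpleGraph

namespace Aux

variable {k : ℕ}

lemma cast_inj_of_lt (hk : 3 ≤ k) {i j : ℕ} (hi : i < k) (hj : j < k) :
    ((i : ZMod k) = (j : ZMod k)) ↔ i = j := by
  constructor
  · intro h
    have := congrArg ZMod.val h
    rwa [ZMod.val_cast_of_lt hi, ZMod.val_cast_of_lt hj] at this
  · rintro rfl; rfl

lemma neg_one_eq (hk : 3 ≤ k) : ((k - 1 : ℕ) : ZMod k) = -1 := by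
  have h1 : 1 ≤ k := by omega
  rw [Nat.cast_sub h1, ZMod.natCast_self, Nat.cast_one, zero_sub]

lemma one_ne_zero' (hk : 3 ≤ k) : (1 : ZMod k) ≠ 0 := by
  have := (cast_inj_of_lt hk (i := 1) (j := 0) (by omega) (by omega))
  simpa using fun h => by simpa [h] using this

lemma neg_one_ne_zero' (hk : 3 ≤ k) : (-1 : ZMod k) ≠ 0 := by
  rw [← neg_one_eq hk]
  intro h
  have := (cast_inj_of_lt hk (i := k - 1) (j := 0) (by omega) (by omega)).mp (by simpa using h)
  omega

lemma one_ne_neg_one' (hk : 3 ≤ k) : (1 : ZMod k) ≠ -1 := by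
  rw [← neg_one_eq hk]
  intro h
  have := (cast_inj_of_lt hk (i := 1) (j := k - 1) (by omega) (by omega)).mp (by simpa using h)
  omega

lemma self_eq_cast_val (hk : 3 ≤ k) (a : ZMod k) : a = ((a.val : ℕ) : ZMod k) := by
  haveI : NeZero k := ⟨by omega⟩
  exact (ZMod.natCast_rightInverse a).symm

end Aux



namespace Aux

variable {k : ℕ}

def vtx (v : Fin 2 → ZMod k) (a b : ZMod k) : Fin 2 → ZMod k := ![v 0 + a, v 1 + b]

lemma vtx0 (v : Fin 2 → ZMod k) (a b : ZMod k) : vtx v a b 0 = v 0 + a := rfl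
lemma vtx1 (v : Fin 2 → ZMod k) (a b : ZMod k) : vtx v a b 1 = v 1 + b := rfl

lemma vtx_inj (v : Fin 2 → ZMod k) (a b a' b' : ZMod k) :
    vtx v a b = vtx v a' b' ↔ a = a' ∧ b = b' := by
  constructor
  · intro h
    have h0 := congrFun h 0
    have h1 := congrFun h 1
    rw [vtx0, vtx0] at h0
    rw [vtx1, vtx1] at h1
    exact ⟨by linear_combination h0 - (by ring : v 0 + a - a = v 0),
      by linear_combination h1⟩
  · rintro ⟨rfl, rfl⟩; rfl

lemma eq_vtx (v u : Fin 2 → ZMod k) : u = vtx v (u 0 - v 0) (u 1 - v 1) := by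
  funext i
  fin_cases i
  · show u 0 = vtx v _ _ 0
    rw [vtx0]; ring
  · show u 1 = vtx v _ _ 1
    rw [vtx1]; ring

lemma adj_h (hk : 3 ≤ k) (v : Fin 2 → ZMod k) (a b : ZMod k) :
    (QCube 2 k).Adj (vtx v a b) (vtx v (a + 1) b) := by
  refine ⟨?_, 0, ?_, ?_⟩
  · rw [Ne, vtx_inj]
    rintro ⟨h, -⟩
    exact one_ne_zero' hk (by linear_combination -h)
  · right
    rw [vtx0, vtx0]; ring
  · intro i hi
    fin_cases i
    · exact absurd rfl hi
    · rfl

lemma adj_v (hk : 3 ≤ k) (v : Fin 2 → ZMod k) (a b : ZMod k) :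
    (QCube 2 k).Adj (vtx v a b) (vtx v a (b + 1)) := by
  refine ⟨?_, 1, ?_, ?_⟩
  · rw [Ne, vtx_inj]
    rintro ⟨-, h⟩
    exact one_ne_zero' hk (by linear_combination -h)
  · right
    rw [vtx1, vtx1]; ring
  · intro i hi
    fin_cases i
    · rfl
    · exact absurd rfl hi

/-- The ambient surviving set minus possibly one vertex `w`. -/
def B (v w : Fin 2 → ZMod k) : Set (Fin 2 → ZMod k) :=
  (closedNbhd (QCube 2 k) {v})ᶜ \ {w}

lemma mem_Tset_iff (hk : 3 ≤ k) (v : Fin 2 → ZMod k) (a b : ZMod k) :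
    vtx v a b ∈ (closedNbhd (QCube 2 k) {v})ᶜ ↔
      ¬(a = 0 ∧ b = 0) ∧ ¬(a = 1 ∧ b = 0) ∧ ¬(a = -1 ∧ b = 0) ∧
      ¬(a = 0 ∧ b = 1) ∧ ¬(a = 0 ∧ b = -1) := by
  have hv : v = vtx v 0 0 := by
    funext i; fin_cases i
    · show v 0 = vtx v _ _ 0
      rw [vtx0]; ring
    · show v 1 = vtx v _ _ 1
      rw [vtx1]; ring
  have hmem : vtx v a b ∈ (closedNbhd (QCube 2 k) {v})ᶜ ↔
      ¬(vtx v a b = v ∨ (QCube 2 k).Adj v (vtx v a b)) := by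
    simp [closedNbhd, Set.mem_union, eq_comm]
  rw [hmem]
  have hadj : (QCube 2 k).Adj v (vtx v a b) ↔
      ((a = 1 ∧ b = 0) ∨ (a = -1 ∧ b = 0) ∨ (a = 0 ∧ b = 1) ∨ (a = 0 ∧ b = -1)) := by
    constructor
    · rintro ⟨hne, j, hj, hrest⟩
      rcases (by decide : ∀ j : Fin 2, j = 0 ∨ j = 1) j with rfl | rfl
      · have hb : b = 0 := by
          have := hrest 1 (by decide)
          rw [vtx1] at this
          linear_combination -this
        rcases hj with h | h
        · rw [vtx0] at h
          exact Or.inr (Or.inl ⟨by linear_combination -h, hb⟩)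
        · rw [vtx0] at h
          exact Or.inl ⟨by linear_combination -h, hb⟩
      · have ha : a = 0 := by
          have := hrest 0 (by decide)
          rw [vtx0] at this
          linear_combination -this
        rcases hj with h | h
        · rw [vtx1] at h
          exact Or.inr (Or.inr (Or.inr ⟨ha, by linear_combination -h⟩))
        · rw [vtx1] at h
          exact Or.inr (Or.inr (Or.inl ⟨ha, by linear_combination -h⟩))
    · intro h
      rcases h with ⟨rfl, rfl⟩ | ⟨rfl, rfl⟩ | ⟨rfl, rfl⟩ | ⟨rfl, rfl⟩
      · have := adj_h hk v 0 0
        rw [zero_add, ← hv] at this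
        exact this
      · have := adj_h hk v (-1) 0
        rw [neg_add_cancel, ← hv] at this
        exact this.symm
      · have := adj_v hk v 0 0
        rw [zero_add, ← hv] at this
        exact this
      · have := adj_v hk v 0 (-1)
        rw [neg_add_cancel, ← hv] at this
        exact this.symm
  have heqv : vtx v a b = v ↔ (a = 0 ∧ b = 0) := by
    rw [hv]
    nth_rewrite 2 [hv]
    rw [vtx_inj]
  rw [heqv, hadj]
  push_neg
  tauto

end Aux


namespace Aux

variable {k : ℕ}

lemma vtx_eq_w_iff (v w : Fin 2 → ZMod k) (a b : ZMod k) :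
    vtx v a b = w ↔ a = w 0 - v 0 ∧ b = w 1 - v 1 := by
  constructor
  · intro h
    have h0 := congrFun h 0
    have h1 := congrFun h 1
    rw [vtx0] at h0
    rw [vtx1] at h1
    exact ⟨by linear_combination h0, by linear_combination h1⟩
  · rintro ⟨rfl, rfl⟩
    exact (eq_vtx v w).symm

lemma mem_B_iff (hk : 3 ≤ k) (v w : Fin 2 → ZMod k) (a b : ZMod k) :
    vtx v a b ∈ B v w ↔
      (¬(a = 0 ∧ b = 0) ∧ ¬(a = 1 ∧ b = 0) ∧ ¬(a = -1 ∧ b = 0) ∧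
       ¬(a = 0 ∧ b = 1) ∧ ¬(a = 0 ∧ b = -1)) ∧
      ¬(a = w 0 - v 0 ∧ b = w 1 - v 1) := by
  simp only [B, Set.mem_diff, Set.mem_singleton_iff, mem_Tset_iff hk, vtx_eq_w_iff]

def step (v w : Fin 2 → ZMod k) (x y : Fin 2 → ZMod k) : Prop :=
  x ∈ B v w ∧ y ∈ B v w ∧ (QCube 2 k).Adj x y

def R (v w : Fin 2 → ZMod k) : (Fin 2 → ZMod k) → (Fin 2 → ZMod k) → Prop :=
  Relation.ReflTransGen (step v w)

lemma R.rfl' {v w x : Fin 2 → ZMod k} : R v w x x := Relation.ReflTransGen.refl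

lemma Rsymm {v w : Fin 2 → ZMod k} {x y : Fin 2 → ZMod k} (h : R v w x y) : R v w y x :=
  by
    haveI : Std.Symm (step v w) := ⟨fun _ _ h => ⟨h.2.1, h.1, h.2.2.symm⟩⟩
    exact Std.Symm.symm (r := Relation.ReflTransGen (step v w)) _ _ h

lemma Rtrans {v w : Fin 2 → ZMod k} {x y z : Fin 2 → ZMod k}
    (h : R v w x y) (h' : R v w y z) : R v w x z := h.trans h'

lemma Rstep {v w : Fin 2 → ZMod k} {x y : Fin 2 → ZMod k}
    (hx : x ∈ B v w) (hy : y ∈ B v w) (h : (QCube 2 k).Adj x y) : R v w x y :=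
  Relation.ReflTransGen.single ⟨hx, hy, h⟩

lemma chain (v w : Fin 2 → ZMod k) (f : ℕ → (Fin 2 → ZMod k)) :
    ∀ n : ℕ, (∀ i, i ≤ n → f i ∈ B v w) →
      (∀ i, i < n → (QCube 2 k).Adj (f i) (f (i + 1))) → R v w (f 0) (f n) := by
  intro n
  induction n with
  | zero => intro _ _; exact Relation.ReflTransGen.refl
  | succ n ih =>
    intro hmem hadj
    exact (ih (fun i hi => hmem i (by omega)) (fun i hi => hadj i (by omega))).tail
      ⟨hmem n (by omega), hmem (n + 1) le_rfl, hadj n (by omega)⟩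

lemma walk_col (hk : 3 ≤ k) (v w : Fin 2 → ZMod k) (b : ZMod k) (m n : ℕ) (hmn : m ≤ n)
    (hmem : ∀ i, m ≤ i → i ≤ n → vtx v (i : ZMod k) b ∈ B v w) :
    R v w (vtx v (m : ZMod k) b) (vtx v (n : ZMod k) b) := by
  have key := chain v w (fun i => vtx v ((m + i : ℕ) : ZMod k) b) (n - m)
    (fun i _ => hmem (m + i) (by omega) (by omega))
    (fun i _ => by
      show (QCube 2 k).Adj (vtx v ((m + i : ℕ) : ZMod k) b) (vtx v ((m + (i+1) : ℕ) : ZMod k) b)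
      have hc : ((m + (i + 1) : ℕ) : ZMod k) = ((m + i : ℕ) : ZMod k) + 1 := by
        push_cast; ring
      rw [hc]
      exact adj_h hk v _ b)
  change R v w (vtx v (m : ZMod k) b) (vtx v ((m + (n - m) : ℕ) : ZMod k) b) at key
  rw [show m + (n - m) = n by omega] at key
  exact key

lemma walk_row (hk : 3 ≤ k) (v w : Fin 2 → ZMod k) (a : ZMod k) (m n : ℕ) (hmn : m ≤ n)
    (hmem : ∀ i, m ≤ i → i ≤ n → vtx v a (i : ZMod k) ∈ B v w) :
    R v w (vtx v a (m : ZMod k)) (vtx v a (n : ZMod k)) := by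
  have key := chain v w (fun i => vtx v a ((m + i : ℕ) : ZMod k)) (n - m)
    (fun i _ => hmem (m + i) (by omega) (by omega))
    (fun i _ => by
      show (QCube 2 k).Adj (vtx v a ((m + i : ℕ) : ZMod k)) (vtx v a ((m + (i+1) : ℕ) : ZMod k))
      have hc : ((m + (i + 1) : ℕ) : ZMod k) = ((m + i : ℕ) : ZMod k) + 1 := by
        push_cast; ring
      rw [hc]
      exact adj_v hk v a _)
  change R v w (vtx v a (m : ZMod k)) (vtx v a ((m + (n - m) : ℕ) : ZMod k)) at key
  rw [show m + (n - m) = n by omega] at key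
  exact key

lemma cast_ne_zero' (hk : 3 ≤ k) {i : ℕ} (h1 : 1 ≤ i) (h2 : i ≤ k - 1) :
    (i : ZMod k) ≠ 0 := by
  intro h
  rw [show (0 : ZMod k) = ((0 : ℕ) : ZMod k) by norm_num] at h
  exact absurd ((cast_inj_of_lt hk (by omega) (by omega)).mp h) (by omega)

lemma cast_ne_one' (hk : 3 ≤ k) {i : ℕ} (h1 : 2 ≤ i) (h2 : i ≤ k - 1) :
    (i : ZMod k) ≠ 1 := by
  intro h
  rw [show (1 : ZMod k) = ((1 : ℕ) : ZMod k) by norm_num] at h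
  exact absurd ((cast_inj_of_lt hk (by omega) (by omega)).mp h) (by omega)

lemma cast_ne_neg_one' (hk : 3 ≤ k) {i : ℕ} (h2 : i ≤ k - 2) :
    (i : ZMod k) ≠ -1 := by
  intro h
  rw [← neg_one_eq hk] at h
  exact absurd ((cast_inj_of_lt hk (by omega) (by omega)).mp h) (by omega)

lemma cast_ne_of_val_ne (hk : 3 ≤ k) {i : ℕ} (hik : i < k) (a : ZMod k) (h : a.val ≠ i) :
    (i : ZMod k) ≠ a := by
  intro h'
  rw [← h'] at h
  exact h (ZMod.val_cast_of_lt hik)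

end Aux


namespace Aux

variable {k : ℕ}

lemma val_pos (hk : 3 ≤ k) {a : ZMod k} (h : a ≠ 0) : 1 ≤ a.val := by
  haveI : NeZero k := ⟨by omega⟩
  have := (ZMod.val_eq_zero a).not.mpr h
  omega

lemma val_lt'' (hk : 3 ≤ k) (a : ZMod k) : a.val < k := by
  haveI : NeZero k := ⟨by omega⟩
  exact ZMod.val_lt a

lemma val_ne_one_of (hk : 3 ≤ k) {a : ZMod k} (h : a ≠ 1) : a.val ≠ 1 := by
  intro hv
  apply h
  rw [self_eq_cast_val hk a, hv, Nat.cast_one]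

lemma val_ne_last_of (hk : 3 ≤ k) {a : ZMod k} (h : a ≠ -1) : a.val ≠ k - 1 := by
  intro hv
  apply h
  rw [self_eq_cast_val hk a, hv, neg_one_eq hk]

/-- All vertices of row `r` (with `r ≠ 0`, `r` not the first coordinate of `w`)
with nonzero column are in `B`. -/
lemma row_mem (hk : 3 ≤ k) (v w : Fin 2 → ZMod k) (r : ZMod k) (hr0 : r ≠ 0)
    (hw : r ≠ w 0 - v 0) {j : ℕ} (h1 : 1 ≤ j) (h2 : j ≤ k - 1) :
    vtx v r (j : ZMod k) ∈ B v w := by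
  have hj0 : (j : ZMod k) ≠ 0 := cast_ne_zero' hk h1 h2
  rw [mem_B_iff hk]
  refine ⟨⟨?_, ?_, ?_, ?_, ?_⟩, ?_⟩ <;> rintro ⟨x1, x2⟩ <;> first
    | exact hj0 x2 | exact hr0 x1 | exact hw x1

lemma col_mem (hk : 3 ≤ k) (v w : Fin 2 → ZMod k) (c : ZMod k) (hc0 : c ≠ 0)
    (hw : c ≠ w 1 - v 1) {j : ℕ} (h1 : 1 ≤ j) (h2 : j ≤ k - 1) :
    vtx v (j : ZMod k) c ∈ B v w := by
  have hj0 : (j : ZMod k) ≠ 0 := cast_ne_zero' hk h1 h2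
  rw [mem_B_iff hk]
  refine ⟨⟨?_, ?_, ?_, ?_, ?_⟩, ?_⟩ <;> rintro ⟨x1, x2⟩ <;> first
    | exact hj0 x1 | exact hc0 x2 | exact hw x2

/-- Within a safe row, travel from any vertex to the vertex in column `1`,
and to the vertex in column `-1`. -/
lemma row_to (hk : 3 ≤ k) (v w : Fin 2 → ZMod k) (r : ZMod k) (hr0 : r ≠ 0)
    (hw : r ≠ w 0 - v 0) (b : ZMod k) (hb : b ≠ 0) :
    R v w (vtx v r b) (vtx v r 1) ∧ R v w (vtx v r b) (vtx v r (-1)) := by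
  have h1 : 1 ≤ b.val := val_pos hk hb
  have h2 : b.val ≤ k - 1 := by have := val_lt'' hk b; omega
  have hb' : ((b.val : ℕ) : ZMod k) = b := (self_eq_cast_val hk b).symm
  constructor
  · have := walk_row hk v w r 1 b.val h1
      (fun i hi1 hi2 => row_mem hk v w r hr0 hw hi1 (by omega))
    rw [hb', Nat.cast_one] at this
    exact Rsymm this
  · have := walk_row hk v w r b.val (k - 1) h2
      (fun i hi1 hi2 => row_mem hk v w r hr0 hw (by omega) hi2)
    rw [hb', neg_one_eq hk] at this
    exact this

/-- Within a safe column, travel from any vertex with nonzero row to row `1`. -/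
lemma col_travel (hk : 3 ≤ k) (v w : Fin 2 → ZMod k) (c : ZMod k) (hc0 : c ≠ 0)
    (hw : c ≠ w 1 - v 1) {a : ZMod k} (ha : a ≠ 0) :
    R v w (vtx v a c) (vtx v 1 c) := by
  have h1 : 1 ≤ a.val := val_pos hk ha
  have h2 : a.val ≤ k - 1 := by have := val_lt'' hk a; omega
  have ha' : ((a.val : ℕ) : ZMod k) = a := (self_eq_cast_val hk a).symm
  have := walk_col hk v w c 1 a.val h1
    (fun i hi1 hi2 => col_mem hk v w c hc0 hw hi1 (by omega))
  rw [ha', Nat.cast_one] at this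
  exact Rsymm this

end Aux


namespace Aux

variable {k : ℕ}

theorem reach (hk : 3 ≤ k) (v w : Fin 2 → ZMod k) :
    ∃ t, t ∈ B v w ∧ ∀ a b : ZMod k, vtx v a b ∈ B v w → R v w (vtx v a b) t := by
  haveI : NeZero k := ⟨by omega⟩
  have h10 : (1 : ZMod k) ≠ 0 := one_ne_zero' hk
  have hm10 : (-1 : ZMod k) ≠ 0 := neg_one_ne_zero' hk
  have h1m1 : (1 : ZMod k) ≠ -1 := one_ne_neg_one' hk
  by_cases hA : (w 0 - v 0) ≠ 1 ∧ (w 0 - v 0) ≠ -1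
  · -- Case A : w is not in row 1 nor row -1
    obtain ⟨hA1, hA2⟩ := hA
    set c : ZMod k := if w 1 - v 1 = 1 then -1 else 1 with hc
    have hcpm : c = 1 ∨ c = -1 := by
      rw [hc]; split
      · exact Or.inr rfl
      · exact Or.inl rfl
    have hc0 : c ≠ 0 := by
      rcases hcpm with h | h <;> rw [h] <;> assumption
    have hcw : c ≠ w 1 - v 1 := by
      rw [hc]; split
      · next h => rw [h]; exact Ne.symm h1m1
      · next h => exact fun hh => h hh.symm
    have ht : vtx v 1 c ∈ B v w := by
      rw [mem_B_iff hk]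
      refine ⟨⟨?_, ?_, ?_, ?_, ?_⟩, ?_⟩ <;> rintro ⟨x1, x2⟩
      · exact h10 x1
      · exact hc0 x2
      · exact h1m1 x1
      · exact h10 x1
      · exact h10 x1
      · exact hA1 x1.symm
    have hrow1 : ∀ b : ZMod k, b ≠ 0 → R v w (vtx v 1 b) (vtx v 1 c) := by
      intro b hb
      obtain ⟨hL, hR⟩ := row_to hk v w 1 h10 (Ne.symm hA1) b hb
      rcases hcpm with h | h <;> rw [h]
      · exact hL
      · exact hR
    have hcolc : R v w (vtx v (-1) c) (vtx v 1 c) := col_travel hk v w c hc0 hcw hm10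
    have hrowm1 : ∀ b : ZMod k, b ≠ 0 → R v w (vtx v (-1) b) (vtx v 1 c) := by
      intro b hb
      obtain ⟨hL, hR⟩ := row_to hk v w (-1) hm10 (Ne.symm hA2) b hb
      refine Rtrans ?_ hcolc
      rcases hcpm with h | h <;> rw [h]
      · exact hL
      · exact hR
    refine ⟨vtx v 1 c, ht, ?_⟩
    intro a b hab
    have hm := (mem_B_iff hk v w a b).mp hab
    by_cases hb0 : b = 0
    · subst hb0
      have ha0 : a ≠ 0 := fun h => hm.1.1 ⟨h, rfl⟩
      have hmc : vtx v a c ∈ B v w := by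
        rw [mem_B_iff hk]
        refine ⟨⟨?_, ?_, ?_, ?_, ?_⟩, ?_⟩ <;> rintro ⟨x1, x2⟩
        · exact hc0 x2
        · exact hc0 x2
        · exact hc0 x2
        · exact ha0 x1
        · exact ha0 x1
        · exact hcw x2
      have hadj : (QCube 2 k).Adj (vtx v a 0) (vtx v a c) := by
        rcases hcpm with h | h <;> rw [h]
        · have := adj_v hk v a 0
          rwa [zero_add] at this
        · have := adj_v hk v a (-1)
          rw [neg_add_cancel] at this
          exact this.symm
      exact Rtrans (Rstep hab hmc hadj) (col_travel hk v w c hc0 hcw ha0)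
    · by_cases ha1 : a = 1
      · subst ha1; exact hrow1 b hb0
      by_cases ham1 : a = -1
      · subst ham1; exact hrowm1 b hb0
      by_cases ha0 : a = 0
      · subst ha0
        have hmem1b : vtx v 1 b ∈ B v w := by
          rw [mem_B_iff hk]
          refine ⟨⟨?_, ?_, ?_, ?_, ?_⟩, ?_⟩ <;> rintro ⟨x1, x2⟩
          · exact h10 x1
          · exact hb0 x2
          · exact h1m1 x1
          · exact h10 x1
          · exact h10 x1
          · exact hA1 x1.symm
        have hadj : (QCube 2 k).Adj (vtx v 0 b) (vtx v 1 b) := by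
          have := adj_h hk v 0 b
          rwa [zero_add] at this
        exact Rtrans (Rstep hab hmem1b hadj) (hrow1 b hb0)
      · have hn1 : 1 ≤ a.val := val_pos hk ha0
        have hn2 : a.val ≤ k - 1 := by have := val_lt'' hk a; omega
        have hca : ((a.val : ℕ) : ZMod k) = a := (self_eq_cast_val hk a).symm
        by_cases hcmp : (w 0 - v 0).val < a.val
        · -- walk up to row -1
          have hwalk := walk_col hk v w b a.val (k - 1) hn2 (fun i hi1 hi2 => by
            rcases Nat.eq_or_lt_of_le hi1 with h | h
            · rw [← h, hca]; exact hab
            · rw [mem_B_iff hk]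
              have hi0 : (i : ZMod k) ≠ 0 := cast_ne_zero' hk (by omega) hi2
              have hiw : (i : ZMod k) ≠ w 0 - v 0 :=
                cast_ne_of_val_ne hk (by omega) _ (by omega)
              refine ⟨⟨?_, ?_, ?_, ?_, ?_⟩, ?_⟩ <;> rintro ⟨x1, x2⟩
              · exact hb0 x2
              · exact hb0 x2
              · exact hb0 x2
              · exact hi0 x1
              · exact hi0 x1
              · exact hiw x1)
          rw [hca, neg_one_eq hk] at hwalk
          exact Rtrans hwalk (hrowm1 b hb0)
        · -- walk down to row 1
          have hwalk := walk_col hk v w b 1 a.val hn1 (fun i hi1 hi2 => by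
            rcases Nat.eq_or_lt_of_le hi2 with h | h
            · rw [h, hca]; exact hab
            · rw [mem_B_iff hk]
              have hi0 : (i : ZMod k) ≠ 0 := cast_ne_zero' hk hi1 (by omega)
              have hiw : (i : ZMod k) ≠ w 0 - v 0 :=
                cast_ne_of_val_ne hk (by omega) _ (by omega)
              refine ⟨⟨?_, ?_, ?_, ?_, ?_⟩, ?_⟩ <;> rintro ⟨x1, x2⟩
              · exact hb0 x2
              · exact hb0 x2
              · exact hb0 x2
              · exact hi0 x1
              · exact hi0 x1
              · exact hiw x1)
          rw [hca, Nat.cast_one] at hwalk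
          exact Rtrans (Rsymm hwalk) (hrow1 b hb0)
  · -- Cases B and C : w in row 1 or row -1
    have hBC : (w 0 - v 0) = 1 ∨ (w 0 - v 0) = -1 := by tauto
    rcases hBC with hw1 | hwm1
    · -- Case B : w in row 1, target (-1, 1)
      have hwm1' : (-1 : ZMod k) ≠ w 0 - v 0 := by rw [hw1]; exact Ne.symm h1m1
      have ht : vtx v (-1) 1 ∈ B v w := by
        rw [mem_B_iff hk]
        refine ⟨⟨?_, ?_, ?_, ?_, ?_⟩, ?_⟩ <;> rintro ⟨x1, x2⟩
        · exact hm10 x1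
        · exact h10 x2
        · exact h10 x2
        · exact hm10 x1
        · exact hm10 x1
        · exact hwm1' x1
      have hrowm1 : ∀ b : ZMod k, b ≠ 0 → R v w (vtx v (-1) b) (vtx v (-1) 1) :=
        fun b hb => (row_to hk v w (-1) hm10 hwm1' b hb).1
      refine ⟨vtx v (-1) 1, ht, ?_⟩
      intro a b hab
      have hm := (mem_B_iff hk v w a b).mp hab
      by_cases ham1 : a = -1
      · subst ham1
        exact hrowm1 b (fun h => hm.1.2.2.1 ⟨rfl, h⟩)
      by_cases hb0 : b = 0
      · subst hb0
        have ha0 : a ≠ 0 := fun h => hm.1.1 ⟨h, rfl⟩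
        have ha1 : a ≠ 1 := fun h => hm.1.2.1 ⟨h, rfl⟩
        have hn1 : 2 ≤ a.val := by
          have := val_pos hk ha0
          have := val_ne_one_of hk ha1
          omega
        have hn2 : a.val ≤ k - 2 := by
          have := val_ne_last_of hk ham1
          have := val_lt'' hk a
          omega
        have hca : ((a.val : ℕ) : ZMod k) = a := (self_eq_cast_val hk a).symm
        have hmem : vtx v a 1 ∈ B v w := by
          rw [mem_B_iff hk]
          refine ⟨⟨?_, ?_, ?_, ?_, ?_⟩, ?_⟩ <;> rintro ⟨x1, x2⟩
          · exact h10 x2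
          · exact h10 x2
          · exact h10 x2
          · exact ha0 x1
          · exact ha0 x1
          · rw [hw1] at x1; exact ha1 x1
        have hadj : (QCube 2 k).Adj (vtx v a 0) (vtx v a 1) := by
          have := adj_v hk v a 0
          rwa [zero_add] at this
        have hwalk := walk_col hk v w 1 a.val (k - 1) (by omega) (fun i hi1 hi2 => by
          rw [mem_B_iff hk]
          have hi0 : (i : ZMod k) ≠ 0 := cast_ne_zero' hk (by omega) hi2
          have hi1' : (i : ZMod k) ≠ 1 := cast_ne_one' hk (by omega) hi2
          refine ⟨⟨?_, ?_, ?_, ?_, ?_⟩, ?_⟩ <;> rintro ⟨x1, x2⟩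
          · exact h10 x2
          · exact h10 x2
          · exact h10 x2
          · exact hi0 x1
          · exact hi0 x1
          · rw [hw1] at x1; exact hi1' x1)
        rw [hca, neg_one_eq hk] at hwalk
        exact Rtrans (Rstep hab hmem hadj) hwalk
      · by_cases ha0 : a = 0
        · subst ha0
          have hmem : vtx v (-1) b ∈ B v w := by
            rw [mem_B_iff hk]
            refine ⟨⟨?_, ?_, ?_, ?_, ?_⟩, ?_⟩ <;> rintro ⟨x1, x2⟩
            · exact hm10 x1
            · exact hb0 x2
            · exact hb0 x2
            · exact hm10 x1
            · exact hm10 x1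
            · exact hwm1' x1
          have hadj : (QCube 2 k).Adj (vtx v 0 b) (vtx v (-1) b) := by
            have := adj_h hk v (-1) b
            rw [neg_add_cancel] at this
            exact this.symm
          exact Rtrans (Rstep hab hmem hadj) (hrowm1 b hb0)
        · have hn1 : 1 ≤ a.val := val_pos hk ha0
          have hn2 : a.val ≤ k - 2 := by
            have := val_ne_last_of hk ham1
            have := val_lt'' hk a
            omega
          have hca : ((a.val : ℕ) : ZMod k) = a := (self_eq_cast_val hk a).symm
          have hwalk := walk_col hk v w b a.val (k - 1) (by omega) (fun i hi1 hi2 => by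
            rcases Nat.eq_or_lt_of_le hi1 with h | h
            · rw [← h, hca]; exact hab
            · rw [mem_B_iff hk]
              have hi0 : (i : ZMod k) ≠ 0 := cast_ne_zero' hk (by omega) hi2
              have hi1' : (i : ZMod k) ≠ 1 := cast_ne_one' hk (by omega) hi2
              refine ⟨⟨?_, ?_, ?_, ?_, ?_⟩, ?_⟩ <;> rintro ⟨x1, x2⟩
              · exact hb0 x2
              · exact hb0 x2
              · exact hb0 x2
              · exact hi0 x1
              · exact hi0 x1
              · rw [hw1] at x1; exact hi1' x1)
          rw [hca, neg_one_eq hk] at hwalk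
          exact Rtrans hwalk (hrowm1 b hb0)
    · -- Case C : w in row -1, target (1, 1)
      have hw1' : (1 : ZMod k) ≠ w 0 - v 0 := by rw [hwm1]; exact h1m1
      have ht : vtx v 1 1 ∈ B v w := by
        rw [mem_B_iff hk]
        refine ⟨⟨?_, ?_, ?_, ?_, ?_⟩, ?_⟩ <;> rintro ⟨x1, x2⟩
        · exact h10 x1
        · exact h10 x2
        · exact h1m1 x1
        · exact h10 x1
        · exact h10 x1
        · exact hw1' x1
      have hrow1 : ∀ b : ZMod k, b ≠ 0 → R v w (vtx v 1 b) (vtx v 1 1) :=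
        fun b hb => (row_to hk v w 1 h10 hw1' b hb).1
      refine ⟨vtx v 1 1, ht, ?_⟩
      intro a b hab
      have hm := (mem_B_iff hk v w a b).mp hab
      by_cases ha1 : a = 1
      · subst ha1
        exact hrow1 b (fun h => hm.1.2.1 ⟨rfl, h⟩)
      by_cases hb0 : b = 0
      · subst hb0
        have ha0 : a ≠ 0 := fun h => hm.1.1 ⟨h, rfl⟩
        have ham1 : a ≠ -1 := fun h => hm.1.2.2.1 ⟨h, rfl⟩
        have hn1 : 2 ≤ a.val := by
          have := val_pos hk ha0
          have := val_ne_one_of hk ha1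
          omega
        have hn2 : a.val ≤ k - 2 := by
          have := val_ne_last_of hk ham1
          have := val_lt'' hk a
          omega
        have hca : ((a.val : ℕ) : ZMod k) = a := (self_eq_cast_val hk a).symm
        have hmem : vtx v a 1 ∈ B v w := by
          rw [mem_B_iff hk]
          refine ⟨⟨?_, ?_, ?_, ?_, ?_⟩, ?_⟩ <;> rintro ⟨x1, x2⟩
          · exact h10 x2
          · exact h10 x2
          · exact h10 x2
          · exact ha0 x1
          · exact ha0 x1
          · rw [hwm1] at x1; exact ham1 x1
        have hadj : (QCube 2 k).Adj (vtx v a 0) (vtx v a 1) := by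
          have := adj_v hk v a 0
          rwa [zero_add] at this
        have hwalk := walk_col hk v w 1 1 a.val (by omega) (fun i hi1 hi2 => by
          rw [mem_B_iff hk]
          have hi0 : (i : ZMod k) ≠ 0 := cast_ne_zero' hk hi1 (by omega)
          have him1 : (i : ZMod k) ≠ -1 := cast_ne_neg_one' hk (by omega)
          refine ⟨⟨?_, ?_, ?_, ?_, ?_⟩, ?_⟩ <;> rintro ⟨x1, x2⟩
          · exact h10 x2
          · exact h10 x2
          · exact h10 x2
          · exact hi0 x1
          · exact hi0 x1
          · rw [hwm1] at x1; exact him1 x1)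
        rw [hca, Nat.cast_one] at hwalk
        exact Rtrans (Rstep hab hmem hadj) (Rsymm hwalk)
      · by_cases ha0 : a = 0
        · subst ha0
          have hmem : vtx v 1 b ∈ B v w := by
            rw [mem_B_iff hk]
            refine ⟨⟨?_, ?_, ?_, ?_, ?_⟩, ?_⟩ <;> rintro ⟨x1, x2⟩
            · exact h10 x1
            · exact hb0 x2
            · exact h1m1 x1
            · exact h10 x1
            · exact h10 x1
            · exact hw1' x1
          have hadj : (QCube 2 k).Adj (vtx v 0 b) (vtx v 1 b) := by
            have := adj_h hk v 0 b
            rwa [zero_add] at this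
          exact Rtrans (Rstep hab hmem hadj) (hrow1 b hb0)
        · have hn1 : 1 ≤ a.val := val_pos hk ha0
          have hn2 : a.val ≤ k - 1 := by have := val_lt'' hk a; omega
          have hca : ((a.val : ℕ) : ZMod k) = a := (self_eq_cast_val hk a).symm
          have hwalk := walk_col hk v w b 1 a.val hn1 (fun i hi1 hi2 => by
            rcases Nat.eq_or_lt_of_le hi2 with h | h
            · rw [h, hca]; exact hab
            · rw [mem_B_iff hk]
              have hi0 : (i : ZMod k) ≠ 0 := cast_ne_zero' hk hi1 (by omega)
              have him1 : (i : ZMod k) ≠ -1 := cast_ne_neg_one' hk (by omega)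
              refine ⟨⟨?_, ?_, ?_, ?_, ?_⟩, ?_⟩ <;> rintro ⟨x1, x2⟩
              · exact hb0 x2
              · exact hb0 x2
              · exact hb0 x2
              · exact hi0 x1
              · exact hi0 x1
              · rw [hwm1] at x1; exact him1 x1)
          rw [hca, Nat.cast_one] at hwalk
          exact Rtrans (Rsymm hwalk) (hrow1 b hb0)

end Aux


namespace Aux

variable {k : ℕ}

lemma transfer (hk : 3 ≤ k) (v w : Fin 2 → ZMod k)
    (S : Set ↥(closedNbhd (QCube 2 k) {v})ᶜ)
    (hiff : ∀ (u : Fin 2 → ZMod k) (hu : u ∈ (closedNbhd (QCube 2 k) {v})ᶜ),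
      (⟨u, hu⟩ : ↥(closedNbhd (QCube 2 k) {v})ᶜ) ∈ Sᶜ ↔ u ≠ w)
    {x y : Fin 2 → ZMod k} (hxy : R v w x y)
    (hx1 : x ∈ (closedNbhd (QCube 2 k) {v})ᶜ) (hx2 : (⟨x, hx1⟩ : ↥(closedNbhd (QCube 2 k) {v})ᶜ) ∈ Sᶜ) :
    ∀ (hy1 : y ∈ (closedNbhd (QCube 2 k) {v})ᶜ)
      (hy2 : (⟨y, hy1⟩ : ↥(closedNbhd (QCube 2 k) {v})ᶜ) ∈ Sᶜ),
      ((survival (QCube 2 k) {v}).induce Sᶜ).Reachable ⟨⟨x, hx1⟩, hx2⟩ ⟨⟨y, hy1⟩, hy2⟩ := by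
  induction hxy with
  | refl => intro hy1 hy2; rfl
  | tail hR hstep ih =>
    intro hy1 hy2
    obtain ⟨hbB, hyB, hadj⟩ := hstep
    have hb1 : _ ∈ (closedNbhd (QCube 2 k) {v})ᶜ := hbB.1
    have hb2 := (hiff _ hb1).mpr hbB.2
    refine (ih hb1 hb2).trans ?_
    exact SimpleGraph.Adj.reachable hadj

lemma tset_mem (hk : 3 ≤ k) (v : Fin 2 → ZMod k) {a b : ZMod k}
    (ha : a ≠ 0 ∨ (b ≠ 0 ∧ b ≠ 1 ∧ b ≠ -1)) (hb : b ≠ 0 ∨ (a ≠ 0 ∧ a ≠ 1 ∧ a ≠ -1)) :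
    vtx v a b ∈ (closedNbhd (QCube 2 k) {v})ᶜ := by
  rw [mem_Tset_iff hk]
  refine ⟨?_, ?_, ?_, ?_, ?_⟩ <;> rintro ⟨x1, x2⟩
  · rcases ha with h | h; exact h x1; exact h.1 x2
  · rcases hb with h | h; exact h x2; exact h.2.1 x1
  · rcases hb with h | h; exact h x2; exact h.2.2 x1
  · rcases ha with h | h; exact h x1; exact h.2.1 x2
  · rcases ha with h | h; exact h x1; exact h.2.2 x2

end Aux



open Aux

theorem stmt12 (k : ℕ) (hk : 3 ≤ k) (v : Fin 2 → ZMod k) :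
    2 ≤ vConn (survival (QCube 2 k) {v}) := by
  haveI : NeZero k := ⟨by omega⟩
  have h10 : (1 : ZMod k) ≠ 0 := one_ne_zero' hk
  have hm10 : (-1 : ZMod k) ≠ 0 := neg_one_ne_zero' hk
  have h1m1 : (1 : ZMod k) ≠ -1 := one_ne_neg_one' hk
  rw [vConn]
  apply le_csInf
  · refine ⟨(Set.univ : Set ↥(closedNbhd (QCube 2 k) {v})ᶜ).ncard,
      Set.univ, Set.finite_univ, rfl, Or.inl ?_⟩
    intro hcon
    obtain ⟨x⟩ := hcon.nonempty
    simpa using x.2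
  · rintro m ⟨S, hSfin, rfl, hbad⟩
    by_contra hlt
    push_neg at hlt
    have hcard : ∀ a ∈ S, ∀ b ∈ S, a = b := (Set.ncard_le_one hSfin).mp (by omega)
    have hsub : S.Subsingleton := fun a ha b hb => hcard a ha b hb
    -- produce a single "forbidden" ambient vertex w
    obtain ⟨w, hiff⟩ : ∃ w : Fin 2 → ZMod k,
        ∀ (u : Fin 2 → ZMod k) (hu : u ∈ (closedNbhd (QCube 2 k) {v})ᶜ),
          (⟨u, hu⟩ : ↥(closedNbhd (QCube 2 k) {v})ᶜ) ∈ Sᶜ ↔ u ≠ w := by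
      obtain hS | ⟨s0, hS⟩ := hsub.eq_empty_or_singleton
      · refine ⟨v, fun u hu => ?_⟩
        subst hS
        simp only [Set.compl_empty, Set.mem_univ, true_iff]
        intro h
        subst h
        exact hu (Or.inl rfl)
      · refine ⟨s0.1, fun u hu => ?_⟩
        subst hS
        simp only [Set.mem_compl_iff, Set.mem_singleton_iff]
        exact not_congr Subtype.ext_iff
    obtain ⟨t, htB, hreach⟩ := reach hk v w
    have ht1 : t ∈ (closedNbhd (QCube 2 k) {v})ᶜ := htB.1
    have ht2 : (⟨t, ht1⟩ : ↥(closedNbhd (QCube 2 k) {v})ᶜ) ∈ Sᶜ := (hiff t ht1).mpr htB.2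
    rcases hbad with hnc | ⟨x0, hx0⟩
    · apply hnc
      haveI : Nonempty ↥Sᶜ := ⟨⟨⟨t, ht1⟩, ht2⟩⟩
      refine ⟨?_⟩
      intro x y
      have hxB : x.1.1 ∈ B v w := ⟨x.1.2, (hiff _ x.1.2).mp x.2⟩
      have hyB : y.1.1 ∈ B v w := ⟨y.1.2, (hiff _ y.1.2).mp y.2⟩
      have hRx : R v w x.1.1 t := by
        have := hreach (x.1.1 0 - v 0) (x.1.1 1 - v 1)
          (by rw [← eq_vtx v x.1.1]; exact hxB)
        rwa [← eq_vtx v x.1.1] at this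
      have hRy : R v w y.1.1 t := by
        have := hreach (y.1.1 0 - v 0) (y.1.1 1 - v 1)
          (by rw [← eq_vtx v y.1.1]; exact hyB)
        rwa [← eq_vtx v y.1.1] at this
      exact transfer hk v w S hiff (Rtrans hRx (Rsymm hRy)) x.1.2 x.2 y.1.2 y.2
    · -- complement cannot be a singleton
      have key : ∀ (u1 u2 : Fin 2 → ZMod k) (h1 : u1 ∈ (closedNbhd (QCube 2 k) {v})ᶜ)
          (h2 : u2 ∈ (closedNbhd (QCube 2 k) {v})ᶜ),
          u1 ≠ u2 → u1 ≠ w → u2 ≠ w → False := by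
        intro u1 u2 h1 h2 hne hw1 hw2
        have e1 : (⟨u1, h1⟩ : ↥(closedNbhd (QCube 2 k) {v})ᶜ) ∈ Sᶜ := (hiff _ h1).mpr hw1
        have e2 : (⟨u2, h2⟩ : ↥(closedNbhd (QCube 2 k) {v})ᶜ) ∈ Sᶜ := (hiff _ h2).mpr hw2
        rw [hx0, Set.mem_singleton_iff] at e1 e2
        exact hne (congrArg Subtype.val (e1.trans e2.symm))
      have m1 : vtx v 1 1 ∈ (closedNbhd (QCube 2 k) {v})ᶜ :=
        tset_mem hk v (Or.inl h10) (Or.inl h10)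
      have m2 : vtx v (-1) 1 ∈ (closedNbhd (QCube 2 k) {v})ᶜ :=
        tset_mem hk v (Or.inl hm10) (Or.inl h10)
      have m3 : vtx v 1 (-1) ∈ (closedNbhd (QCube 2 k) {v})ᶜ :=
        tset_mem hk v (Or.inl h10) (Or.inl hm10)
      have d12 : vtx v 1 1 ≠ vtx v (-1) 1 := by
        rw [Ne, vtx_inj]; rintro ⟨h, -⟩; exact h1m1 h
      have d13 : vtx v 1 1 ≠ vtx v 1 (-1) := by
        rw [Ne, vtx_inj]; rintro ⟨-, h⟩; exact h1m1 h
      have d23 : vtx v (-1) 1 ≠ vtx v 1 (-1) := by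
        rw [Ne, vtx_inj]; rintro ⟨h, -⟩; exact h1m1 h.symm
      by_cases hw1 : vtx v 1 1 = w
      · exact key _ _ m2 m3 d23 (fun h => d12 (hw1.trans h.symm))
          (fun h => d13 (hw1.trans h.symm))
      · by_cases hw2 : vtx v (-1) 1 = w
        · exact key _ _ m1 m3 d13 hw1 (fun h => d23 (hw2.trans h.symm))
        · exact key _ _ m1 m2 d12 hw1 hw2
end
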